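/- Fix a countable relational language L with relation symbols R_i of arity a_i (i ∈ ℕ), and let X := ∏_{i∈ℕ} Bool^{(Fin a_i → ℕ)} be the Polish space of L-structures with domain ℕ (product topology, Bool discrete), equipped with its Borel σ-algebra. Then there exists a Borel-measurable function f: X → ℝ such that for all x, y ∈ X that are ω-categorical and without algebraicity: Aut(x) and Aut(y) are isomorphic as topological groups (equivalently, x and y are fo-bi-interpretable) if and only if f(x) = f(y). In other words, fo-bi-interpretability is smooth on the class of ω-categorical structures without algebraicity. -/

import Mathlib

/-- The topology of pointwise convergence on functions `α → β`
(product topology with `β` discrete). -/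
def FnTop (α β : Type*) : TopologicalSpace (α → β) :=
  @Pi.topologicalSpace α (fun _ => β) (fun _ => ⊥)

/-- The coordinatewise action of a permutation on tuples. -/
def tAct {Ω : Type*} (g : Equiv.Perm Ω) {n : ℕ} (u : Fin n → Ω) : Fin n → Ω :=
  fun i => g (u i)

/-- The action of a permutation on sets of tuples. -/
def sAct {Ω : Type*} (g : Equiv.Perm Ω) {n : ℕ} (c : Set (Fin n → Ω)) : Set (Fin n → Ω) :=
  tAct g '' c

/-- A set of permutations is oligomorphic if for every `n` its coordinatewise
action on `n`-tuples has finitely many orbits. -/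
def Oligo {Ω : Type*} (G : Set (Equiv.Perm Ω)) : Prop :=
  ∀ n : ℕ, Set.Finite {o : Set (Fin n → Ω) | ∃ t : Fin n → Ω, o = {s | ∃ g ∈ G, s = tAct g t}}

/-- `G` acts without algebraicity on `Ω`: if the orbit of `a` under the pointwise
stabiliser of a finite tuple `y` is finite, then `a` is an entry of `y`. -/
def NoAlg {Ω : Type*} (G : Set (Equiv.Perm Ω)) : Prop :=
  ∀ (m : ℕ) (y : Fin m → Ω) (a : Ω),
    Set.Finite {b : Ω | ∃ g ∈ G, (∀ i, g (y i) = y i) ∧ b = g a} → ∃ i, a = y i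

/-- `G` is topologically closed in the space of permutations with the topology of
pointwise convergence. -/
def TopClosedPerm {Ω : Type*} (G : Set (Equiv.Perm Ω)) : Prop :=
  @IsClosed (Ω → Ω) (FnTop Ω Ω) {f | ∃ g ∈ G, f = ⇑g}

/-- The `r`-equivalence class of a tuple `u ∈ U`. -/
def cls {Ω : Type*} {n : ℕ} (U : Set (Fin n → Ω))
    (r : (Fin n → Ω) → (Fin n → Ω) → Prop) (u : Fin n → Ω) : Set (Fin n → Ω) :=
  {v ∈ U | r u v}

/-- The quotient `B = U/∼`, realised as the set of equivalence classes. -/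
def classes {Ω : Type*} {n : ℕ} (U : Set (Fin n → Ω))
    (r : (Fin n → Ω) → (Fin n → Ω) → Prop) : Set (Set (Fin n → Ω)) :=
  {c | ∃ u ∈ U, c = cls U r u}

/-- `a` entangles the class `c` if `a` is an entry of every tuple in `c`. -/
def Entangles {Ω : Type*} {n : ℕ} (a : Ω) (c : Set (Fin n → Ω)) : Prop :=
  ∀ v ∈ c, ∃ i, v i = a

/-- `a` strongly entangles `c ∈ B` if it entangles `c` and no other element of `B`. -/
def StronglyEntangles {Ω : Type*} {n : ℕ} (B : Set (Set (Fin n → Ω))) (a : Ω)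
    (c : Set (Fin n → Ω)) : Prop :=
  Entangles a c ∧ ∀ c' ∈ B, Entangles a c' → c' = c

/-- `a` is algebraic over `c`: the orbit of `a` under the stabiliser `G_c` is finite. -/
def AlgebraicOver {Ω : Type*} {n : ℕ} (G : Set (Equiv.Perm Ω)) (a : Ω)
    (c : Set (Fin n → Ω)) : Prop :=
  Set.Finite {b : Ω | ∃ g ∈ G, sAct g c = c ∧ b = g a}

/-- `B` is dense: for every `a ∈ Ω` there are `c₁,…,c_k ∈ B` whose joint stabiliser
is contained in the stabiliser of `a`. -/
def DenseClasses {Ω : Type*} {n : ℕ} (G : Set (Equiv.Perm Ω))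
    (B : Set (Set (Fin n → Ω))) : Prop :=
  ∀ a : Ω, ∃ (k : ℕ) (cc : Fin k → Set (Fin n → Ω)),
    (∀ i, cc i ∈ B) ∧ ∀ g ∈ G, (∀ i, sAct g (cc i) = cc i) → g a = a

/-- The induced action of `G` on `B` is without algebraicity. -/
def NoAlgOn {Ω : Type*} {n : ℕ} (G : Set (Equiv.Perm Ω))
    (B : Set (Set (Fin n → Ω))) : Prop :=
  ∀ (m : ℕ) (cc : Fin m → Set (Fin n → Ω)) (c : Set (Fin n → Ω)),
    (∀ i, cc i ∈ B) → c ∈ B →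
    Set.Finite {c' | ∃ g ∈ G, (∀ i, sAct g (cc i) = cc i) ∧ c' = sAct g c} →
    ∃ i, c = cc i

/-- Codes for structures on `ℕ` in the countable relational language whose `i`-th
relation symbol has arity `a i`. -/
abbrev Codes (a : ℕ → ℕ) := ∀ i : ℕ, (Fin (a i) → ℕ) → Bool

/-- The product topology on the space of codes (`Bool` discrete), turning it into
a Polish space. -/
def XTop (a : ℕ → ℕ) : TopologicalSpace (Codes a) :=
  @Pi.topologicalSpace _ _ (fun _ => @Pi.topologicalSpace _ _ (fun _ => ⊥))

/-- The automorphisms of the structure coded by `x`: permutations of `ℕ`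
preserving each relation and its complement. -/
def AutX {a : ℕ → ℕ} (x : Codes a) : Set (Equiv.Perm ℕ) :=
  {g | ∀ (i : ℕ) (t : Fin (a i) → ℕ), x i (fun j => g (t j)) = x i t}

/-- The structure coded by `x` is ω-categorical. -/
def OmegaCatX {a : ℕ → ℕ} (x : Codes a) : Prop := Oligo (AutX x)

/-- The automorphism group of the structure coded by `x`, as a subgroup of
`Equiv.Perm ℕ`. -/
def AutGX {a : ℕ → ℕ} (x : Codes a) : Subgroup (Equiv.Perm ℕ) where
  carrier := AutX x
  one_mem' := by intro i t; rfl
  mul_mem' := by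
    intro g h hg hh i t
    exact (hg i (fun j => h (t j))).trans (hh i t)
  inv_mem' := by
    intro g hg i t
    have h := hg i (fun j => g⁻¹ (t j))
    have h2 : (fun j => g (g⁻¹ (t j))) = t := by
      funext j; exact g.apply_symm_apply (t j)
    rw [h2] at h
    exact h.symm

/-- The topology of pointwise convergence on the automorphism group. -/
def autXTop {a : ℕ → ℕ} (x : Codes a) : TopologicalSpace (AutGX x) :=
  TopologicalSpace.induced (fun g : AutGX x => ((g : Equiv.Perm ℕ) : ℕ → ℕ)) (FnTop ℕ ℕ)

/-- The automorphism groups of `x` and `y` are topologically isomorphic;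
for ω-categorical structures this is equivalent to fo-bi-interpretability
(Coquand, Ahlbrandt–Ziegler). -/
def FoBiInt {a : ℕ → ℕ} (x y : Codes a) : Prop :=
  ∃ φ : AutGX x ≃* AutGX y,
    @Continuous _ _ (autXTop x) (autXTop y) ⇑φ ∧
    @Continuous _ _ (autXTop y) (autXTop x) ⇑φ.symm

/-- The structure coded by `x` is without algebraicity. -/
def NoAlgX {a : ℕ → ℕ} (x : Codes a) : Prop := NoAlg (AutX x)

namespace Smooth

open Set

variable {a : ℕ → ℕ}

/-- Quantifier-free equivalence of tuples. -/
def QF (x : Codes a) {m : ℕ} (t s : Fin m → ℕ) : Prop :=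
  (∀ i j, t i = t j ↔ s i = s j) ∧
  ∀ (i : ℕ) (u : Fin (a i) → Fin m), x i (t ∘ u) = x i (s ∘ u)

/-- Depth-`k` back-and-forth equivalence. -/
def Eqv (x : Codes a) : ℕ → ∀ {m : ℕ}, (Fin m → ℕ) → (Fin m → ℕ) → Prop
  | 0, _, t, s => QF x t s
  | (k+1), _, t, s => Eqv x k t s ∧
      (∀ p : ℕ, ∃ q : ℕ, Eqv x k (Fin.snoc t p) (Fin.snoc s q)) ∧
      (∀ q : ℕ, ∃ p : ℕ, Eqv x k (Fin.snoc t p) (Fin.snoc s q))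

/-- Full back-and-forth equivalence; for ω-categorical `x` this is the
orbit equivalence of `AutX x`. -/
def Erel (x : Codes a) {m : ℕ} (t s : Fin m → ℕ) : Prop := ∀ k, Eqv x k t s

lemma Eqv.mono {x : Codes a} {k : ℕ} {m : ℕ} {t s : Fin m → ℕ}
    (h : Eqv x (k+1) t s) : Eqv x k t s := h.1

lemma Eqv.refl (x : Codes a) (k : ℕ) {m : ℕ} (t : Fin m → ℕ) : Eqv x k t t := by
  induction k generalizing m with
  | zero => exact ⟨fun i j => Iff.rfl, fun i u => rfl⟩
  | succ k ih => exact ⟨ih t, fun p => ⟨p, ih _⟩, fun q => ⟨q, ih _⟩⟩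

lemma Eqv.symm {x : Codes a} {k : ℕ} {m : ℕ} {t s : Fin m → ℕ}
    (h : Eqv x k t s) : Eqv x k s t := by
  induction k generalizing m with
  | zero => exact ⟨fun i j => (h.1 i j).symm, fun i u => (h.2 i u).symm⟩
  | succ k ih =>
    exact ⟨ih h.1, fun p => (h.2.2 p).imp (fun q hq => ih hq),
      fun q => (h.2.1 q).imp (fun p hp => ih hp)⟩

lemma Eqv.trans {x : Codes a} {k : ℕ} {m : ℕ} {t s w : Fin m → ℕ}
    (h : Eqv x k t s) (h' : Eqv x k s w) : Eqv x k t w := by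
  induction k generalizing m with
  | zero =>
    exact ⟨fun i j => (h.1 i j).trans (h'.1 i j), fun i u => (h.2 i u).trans (h'.2 i u)⟩
  | succ k ih =>
    refine ⟨ih h.1 h'.1, fun p => ?_, fun q => ?_⟩
    · obtain ⟨q, hq⟩ := h.2.1 p
      obtain ⟨r, hr⟩ := h'.2.1 q
      exact ⟨r, ih hq hr⟩
    · obtain ⟨p, hp⟩ := h'.2.2 q
      obtain ⟨r, hr⟩ := h.2.2 p
      exact ⟨r, ih hr hp⟩

lemma Erel.refl (x : Codes a) {m : ℕ} (t : Fin m → ℕ) : Erel x t t := fun k => Eqv.refl x k t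
lemma Erel.symm {x : Codes a} {m : ℕ} {t s : Fin m → ℕ} (h : Erel x t s) : Erel x s t :=
  fun k => (h k).symm
lemma Erel.trans {x : Codes a} {m : ℕ} {t s w : Fin m → ℕ} (h : Erel x t s)
    (h' : Erel x s w) : Erel x t w := fun k => (h k).trans (h' k)

/-- extension of an index map to snoc-compatible map -/
def exm {m' m : ℕ} (u : Fin m' → Fin m) : Fin (m'+1) → Fin (m+1) :=
  Fin.snoc (fun i => (u i).castSucc) (Fin.last m)

lemma snoc_comp_exm {m' m : ℕ} (u : Fin m' → Fin m) (t : Fin m → ℕ) (p : ℕ) :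
    (Fin.snoc t p : Fin (m+1) → ℕ) ∘ exm u = Fin.snoc (t ∘ u) p := by
  funext i
  refine Fin.lastCases ?_ (fun i => ?_) i
  · simp [exm]
  · simp [exm]

lemma Eqv.comp {x : Codes a} {k : ℕ} {m : ℕ} {t s : Fin m → ℕ}
    (h : Eqv x k t s) {m' : ℕ} (u : Fin m' → Fin m) : Eqv x k (t ∘ u) (s ∘ u) := by
  induction k generalizing m m' with
  | zero =>
    exact ⟨fun i j => h.1 (u i) (u j), fun i v => h.2 i (u ∘ v)⟩
  | succ k ih =>
    refine ⟨ih h.1 u, fun p => ?_, fun q => ?_⟩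
    · obtain ⟨q, hq⟩ := h.2.1 p
      exact ⟨q, by simpa [snoc_comp_exm] using ih hq (exm u)⟩
    · obtain ⟨p, hp⟩ := h.2.2 q
      exact ⟨p, by simpa [snoc_comp_exm] using ih hp (exm u)⟩

lemma Erel.comp {x : Codes a} {m : ℕ} {t s : Fin m → ℕ}
    (h : Erel x t s) {m' : ℕ} (u : Fin m' → Fin m) : Erel x (t ∘ u) (s ∘ u) :=
  fun k => (h k).comp u

/-- tuples in the same orbit are `Eqv`-related at every depth. -/
lemma Eqv.ofAut {x : Codes a} {g : Equiv.Perm ℕ} (hg : g ∈ AutX x) (k : ℕ)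
    {m : ℕ} (t : Fin m → ℕ) : Eqv x k t (fun i => g (t i)) := by
  induction k generalizing m with
  | zero =>
    refine ⟨fun i j => ⟨fun h => show g (t i) = g (t j) from congrArg g h,
      fun h => g.injective h⟩, fun i u => ?_⟩
    exact (hg i (fun j => t (u j))).symm
  | succ k ih =>
    refine ⟨ih t, fun p => ⟨g p, ?_⟩, fun q => ⟨g.symm q, ?_⟩⟩
    · have h2 : (fun i => g ((Fin.snoc t p : Fin (m+1) → ℕ) i)) = (Fin.snoc (fun i => g (t i)) (g p) : Fin (m+1) → ℕ) := by
        funext i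
        refine Fin.lastCases ?_ (fun i => ?_) i <;> simp
      have := ih (Fin.snoc t p)
      rw [h2] at this
      exact this
    · have h2 : (fun i => g ((Fin.snoc t (g.symm q) : Fin (m+1) → ℕ) i)) = (Fin.snoc (fun i => g (t i)) q : Fin (m+1) → ℕ) := by
        funext i
        refine Fin.lastCases ?_ (fun i => ?_) i <;> simp
      have := ih (Fin.snoc t (g.symm q))
      rw [h2] at this
      exact this

lemma Erel.ofAut {x : Codes a} {g : Equiv.Perm ℕ} (hg : g ∈ AutX x)
    {m : ℕ} (t : Fin m → ℕ) : Erel x t (fun i => g (t i)) := fun k => Eqv.ofAut hg k t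

/-- the `Erel`-class of a tuple. -/
def Ecl (x : Codes a) {m : ℕ} (t : Fin m → ℕ) : Set (Fin m → ℕ) := {s | Erel x t s}

lemma range_finite_of_factor {α β γ : Type*} (e : α → β) (f : α → γ)
    (h : ∀ p q, e p = e q → f p = f q) (he : (Set.range e).Finite) :
    (Set.range f).Finite := by
  classical
  cases isEmpty_or_nonempty α with
  | inl h => simp [Set.range_eq_empty]
  | inr hne => ?_
  have : Set.range f ⊆ (fun b => if hb : ∃ p, e p = b then f hb.choose else f (Classical.arbitrary _)) ''
      (Set.range e) := by
    · rintro - ⟨p, rfl⟩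
      have hb : ∃ q, e q = e p := ⟨p, rfl⟩
      refine ⟨e p, ⟨p, rfl⟩, ?_⟩
      simp only [dif_pos hb]
      exact h _ _ hb.choose_spec
  exact (he.image _).subset this

/-- the orbit of a tuple. -/
def orb (x : Codes a) {m : ℕ} (t : Fin m → ℕ) : Set (Fin m → ℕ) :=
  {s | ∃ g ∈ AutX x, s = tAct g t}

lemma orb_finite (hx : OmegaCatX x) (m : ℕ) :
    (Set.range fun t : Fin m → ℕ => orb x t).Finite := by
  have := hx m
  convert this using 1
  ext o
  constructor
  · rintro ⟨t, rfl⟩; exact ⟨t, rfl⟩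
  · rintro ⟨t, rfl⟩; exact ⟨t, rfl⟩

lemma mem_orb_self (x : Codes a) {m : ℕ} (t : Fin m → ℕ) : t ∈ orb x t :=
  ⟨1, (AutGX x).one_mem, rfl⟩

lemma orb_eq_of_mem {x : Codes a} {m : ℕ} {t s : Fin m → ℕ} (h : s ∈ orb x t) :
    orb x s = orb x t := by
  obtain ⟨g, hg, rfl⟩ := h
  ext w
  constructor
  · rintro ⟨g', hg', rfl⟩
    exact ⟨g' * g, (AutGX x).mul_mem hg' hg, rfl⟩
  · rintro ⟨g', hg', rfl⟩
    refine ⟨g' * g⁻¹, (AutGX x).mul_mem hg' ((AutGX x).inv_mem hg), ?_⟩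
    funext i
    simp [tAct]

lemma Erel.of_orb {x : Codes a} {m : ℕ} {t s : Fin m → ℕ} (h : s ∈ orb x t) :
    Erel x t s := by
  obtain ⟨g, hg, rfl⟩ := h
  exact Erel.ofAut hg t

lemma Ecl_finite (hx : OmegaCatX x) (m : ℕ) :
    (Set.range fun t : Fin m → ℕ => Ecl x t).Finite := by
  refine range_finite_of_factor (fun t => orb x t) _ ?_ (orb_finite hx m)
  intro p q h
  have h' : orb x p = orb x q := h
  have h1 : Erel x p q := by
    refine Erel.of_orb ?_
    rw [h']; exact mem_orb_self x q
  ext w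
  exact ⟨fun hw => h1.symm.trans hw, fun hw => h1.trans hw⟩

end Smooth
namespace Smooth

open Set

variable {a : ℕ → ℕ} {x : Codes a}

/-- Generic pigeonhole: a downward-closed family with finite range which is
arbitrarily large must contain a full column. -/
lemma Eqv.mono_le {m : ℕ} {t s : Fin m → ℕ} {j k : ℕ} (hjk : j ≤ k)
    (h : Eqv x k t s) : Eqv x j t s := by
  obtain ⟨d, rfl⟩ := Nat.exists_eq_add_of_le hjk
  clear hjk
  induction d with
  | zero => exact h
  | succ d ih => exact ih (Eqv.mono h)

lemma pigeon {Good : ℕ → ℕ → Prop}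
    (hdc : ∀ b j k, j ≤ k → Good b k → Good b j)
    (hfin : (Set.range fun b => {k | Good b k}).Finite)
    (hall : ∀ k, ∃ b, Good b k) :
    ∃ b, ∀ k, Good b k := by
  classical
  by_contra hcon
  push_neg at hcon
  -- each column has a least failure
  have hbd : ∀ S ∈ Set.range fun b => {k | Good b k}, ∃ N, ∀ k ∈ S, k ≤ N := by
    rintro S ⟨b, rfl⟩
    obtain ⟨k0, hk0⟩ := hcon b
    refine ⟨k0, fun k hk => ?_⟩
    by_contra hlt
    push_neg at hlt
    exact hk0 (hdc b k0 k hlt.le hk)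
  choose N hN using hbd
  obtain ⟨M, hM⟩ := (hfin.image fun S => if h : S ∈ Set.range fun b => {k | Good b k} then N S h else 0).bddAbove
  obtain ⟨b, hb⟩ := hall (M + 1)
  have hmem : {k | Good b k} ∈ Set.range fun b => {k | Good b k} := ⟨b, rfl⟩
  have h1 : N _ hmem ≤ M := by
    have := hM (Set.mem_image_of_mem _ hmem)
    simpa [dif_pos hmem] using this
  have h2 := hN _ hmem (M+1) hb
  omega

lemma erel_forth (hx : OmegaCatX x) {m : ℕ} {t s : Fin m → ℕ}
    (h : Erel x t s) (p : ℕ) : ∃ q, Erel x (Fin.snoc t p) (Fin.snoc s q) := by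
  refine pigeon (Good := fun q k => Eqv x k (Fin.snoc t p) (Fin.snoc s q)) ?_ ?_ ?_
  · intro b j k hjk hk
    exact Eqv.mono_le hjk hk
  · refine range_finite_of_factor (fun q => Ecl x (Fin.snoc s q)) _ ?_ ?_
    · intro p' q' hpq
      have hpq' : Ecl x (Fin.snoc s p') = Ecl x (Fin.snoc s q') := hpq
      have h1 : Erel x (Fin.snoc s p') (Fin.snoc s q') := by
        have : (Fin.snoc s q' : Fin (m+1) → ℕ) ∈ Ecl x (Fin.snoc s p') := by
          rw [hpq']; exact Erel.refl x _
        exact this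
      ext k
      exact ⟨fun hk => hk.trans (h1 k), fun hk => hk.trans (h1 k).symm⟩
    · refine (Ecl_finite hx (m+1)).subset ?_
      rintro - ⟨q, rfl⟩
      exact ⟨_, rfl⟩
  · intro k
    exact (h (k+1)).2.1 p

end Smooth
namespace Smooth

open Set

noncomputable def nfind {Q : ℕ → Prop} (h : ∃ n, Q n) : ℕ :=
  @Nat.find Q (Classical.decPred Q) h

lemma nfind_spec {Q : ℕ → Prop} (h : ∃ n, Q n) : Q (nfind h) :=
  @Nat.find_spec Q (Classical.decPred Q) h

lemma nfind_min {Q : ℕ → Prop} (h : ∃ n, Q n) {r : ℕ} (hr : r < nfind h) : ¬ Q r :=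
  @Nat.find_min Q (Classical.decPred Q) h r hr

lemma fresh_exists {m : ℕ} (w : Fin m → ℕ) : ∃ r : ℕ, ∀ i, w i ≠ r := by
  obtain ⟨r, hr⟩ := (Set.finite_range w).infinite_compl.nonempty
  exact ⟨r, fun i hi => hr ⟨i, hi⟩⟩

/-- Hypotheses for the back-and-forth construction. -/
structure BFHyp (P : ∀ {m : ℕ}, (Fin m → ℕ) → (Fin m → ℕ) → Prop) : Prop where
  pat : ∀ {m : ℕ} (t s : Fin m → ℕ), P t s → ∀ i j, t i = t j ↔ s i = s j
  forth : ∀ {m : ℕ} (t s : Fin m → ℕ), P t s → ∀ p, ∃ q, P (Fin.snoc t p) (Fin.snoc s q)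
  back : ∀ {m : ℕ} (t s : Fin m → ℕ), P t s → ∀ q, ∃ p, P (Fin.snoc t p) (Fin.snoc s q)

variable {P : ∀ {m : ℕ}, (Fin m → ℕ) → (Fin m → ℕ) → Prop}

/-- State of the back-and-forth construction. -/
structure BFSt (P : ∀ {m : ℕ}, (Fin m → ℕ) → (Fin m → ℕ) → Prop) where
  m : ℕ
  w : ℕ → ℕ
  z : ℕ → ℕ
  hp : P (fun i : Fin m => w i) (fun i : Fin m => z i)

/-- Update a function at position `m`. -/
def updt (w : ℕ → ℕ) (m : ℕ) (p : ℕ) : ℕ → ℕ := fun r => if r = m then p else w r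

lemma restrict_updt (w : ℕ → ℕ) (m : ℕ) (p : ℕ) :
    (fun i : Fin (m+1) => updt w m p i) = Fin.snoc (fun i : Fin m => w i) p := by
  funext i
  refine Fin.lastCases ?_ (fun i => ?_) i
  · rw [Fin.snoc_last]
    show updt w m p ((Fin.last m : Fin (m+1)) : ℕ) = p
    simp [updt, Fin.last]
  · rw [Fin.snoc_castSucc]
    have hne : ((i.castSucc : Fin (m+1)) : ℕ) ≠ m := by
      simpa using Nat.ne_of_lt i.isLt
    show updt w m p ((i.castSucc : Fin (m+1)) : ℕ) = w i
    simp only [updt, if_neg hne]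
    rfl

noncomputable def BFstep (H : BFHyp P) (j : ℕ) (st : BFSt P) : BFSt P :=
  if j % 2 = 0 then
    let p := nfind (fresh_exists (fun i : Fin st.m => st.w i))
    let q := (H.forth _ _ st.hp p).choose
    ⟨st.m + 1, updt st.w st.m p, updt st.z st.m q, by
      rw [restrict_updt, restrict_updt]
      exact (H.forth _ _ st.hp p).choose_spec⟩
  else
    let q := nfind (fresh_exists (fun i : Fin st.m => st.z i))
    let p := (H.back _ _ st.hp q).choose
    ⟨st.m + 1, updt st.w st.m p, updt st.z st.m q, by
      rw [restrict_updt, restrict_updt]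
      exact (H.back _ _ st.hp q).choose_spec⟩

lemma BFstep_m (H : BFHyp P) (j : ℕ) (st : BFSt P) : (BFstep H j st).m = st.m + 1 := by
  unfold BFstep
  split <;> rfl

lemma BFstep_w (H : BFHyp P) (j : ℕ) (st : BFSt P) {r : ℕ} (hr : r ≠ st.m) :
    (BFstep H j st).w r = st.w r := by
  unfold BFstep
  split <;> simp [updt, hr]

lemma BFstep_z (H : BFHyp P) (j : ℕ) (st : BFSt P) {r : ℕ} (hr : r ≠ st.m) :
    (BFstep H j st).z r = st.z r := by
  unfold BFstep
  split <;> simp [updt, hr]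

lemma BFSt.restr (st : BFSt P) {M : ℕ} (hm : st.m = M) :
    P (fun i : Fin M => st.w i) (fun i : Fin M => st.z i) := by
  subst hm
  exact st.hp

variable (H : BFHyp P) {m0 : ℕ} {t0 s0 : Fin m0 → ℕ}

noncomputable def BFseq (h0 : P t0 s0) : ℕ → BFSt P
  | 0 => ⟨m0, fun r => if h : r < m0 then t0 ⟨r, h⟩ else 0,
          fun r => if h : r < m0 then s0 ⟨r, h⟩ else 0, by
            have hw : (fun i : Fin m0 => if h : (i:ℕ) < m0 then t0 ⟨i, h⟩ else 0) = t0 := by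
              funext i; simp [i.isLt]
            have hz : (fun i : Fin m0 => if h : (i:ℕ) < m0 then s0 ⟨i, h⟩ else 0) = s0 := by
              funext i; simp [i.isLt]
            rw [hw, hz]; exact h0⟩
  | (j+1) => BFstep H j (BFseq h0 j)

lemma BFseq_m (h0 : P t0 s0) (j : ℕ) : (BFseq H h0 j).m = m0 + j := by
  induction j with
  | zero => rfl
  | succ j ih =>
    rw [BFseq, BFstep_m, ih]
    omega

lemma BFseq_w_stable (h0 : P t0 s0) {j j' : ℕ} (hj : j ≤ j') {r : ℕ} (hr : r < m0 + j) :
    (BFseq H h0 j').w r = (BFseq H h0 j).w r := by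
  obtain ⟨d, rfl⟩ := Nat.exists_eq_add_of_le hj
  clear hj
  induction d with
  | zero => rfl
  | succ d ih =>
    have h1 : (BFseq H h0 (j + d)).m = m0 + (j + d) := BFseq_m H h0 _
    have : (BFseq H h0 (j + (d+1))).w r = (BFseq H h0 (j+d)).w r := by
      show (BFstep H (j+d) (BFseq H h0 (j+d))).w r = _
      refine BFstep_w H _ _ ?_
      rw [h1]; omega
    rw [this, ih]

lemma BFseq_z_stable (h0 : P t0 s0) {j j' : ℕ} (hj : j ≤ j') {r : ℕ} (hr : r < m0 + j) :
    (BFseq H h0 j').z r = (BFseq H h0 j).z r := by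
  obtain ⟨d, rfl⟩ := Nat.exists_eq_add_of_le hj
  clear hj
  induction d with
  | zero => rfl
  | succ d ih =>
    have h1 : (BFseq H h0 (j + d)).m = m0 + (j + d) := BFseq_m H h0 _
    have : (BFseq H h0 (j + (d+1))).z r = (BFseq H h0 (j+d)).z r := by
      show (BFstep H (j+d) (BFseq H h0 (j+d))).z r = _
      refine BFstep_z H _ _ ?_
      rw [h1]; omega
    rw [this, ih]

/-- The limit enumeration of the domain side. -/
noncomputable def BFW (h0 : P t0 s0) (r : ℕ) : ℕ := (BFseq H h0 (r+1)).w r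

noncomputable def BFZ (h0 : P t0 s0) (r : ℕ) : ℕ := (BFseq H h0 (r+1)).z r

lemma BFW_eq (h0 : P t0 s0) {j r : ℕ} (hr : r < m0 + j) :
    BFW H h0 r = (BFseq H h0 j).w r := by
  rcases le_total j (r+1) with h | h
  · exact BFseq_w_stable H h0 h hr
  · exact (BFseq_w_stable H h0 h (by omega : r < m0 + (r+1))).symm

lemma BFZ_eq (h0 : P t0 s0) {j r : ℕ} (hr : r < m0 + j) :
    BFZ H h0 r = (BFseq H h0 j).z r := by
  rcases le_total j (r+1) with h | h
  · exact BFseq_z_stable H h0 h hr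
  · exact (BFseq_z_stable H h0 h (by omega : r < m0 + (r+1))).symm

lemma BF_inv (h0 : P t0 s0) (j : ℕ) :
    P (fun i : Fin (m0+j) => BFW H h0 i) (fun i : Fin (m0+j) => BFZ H h0 i) := by
  have hm : (BFseq H h0 j).m = m0 + j := BFseq_m H h0 j
  have hw : (fun i : Fin (m0+j) => BFW H h0 i) = (fun i : Fin (m0+j) => (BFseq H h0 j).w i) := by
    funext i; exact BFW_eq H h0 i.isLt
  have hz : (fun i : Fin (m0+j) => BFZ H h0 i) = (fun i : Fin (m0+j) => (BFseq H h0 j).z i) := by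
    funext i; exact BFZ_eq H h0 i.isLt
  rw [hw, hz]
  exact BFSt.restr _ hm

/-- pattern coherence of the limit enumerations -/
lemma BF_pat (h0 : P t0 s0) {r r' : ℕ} :
    BFW H h0 r = BFW H h0 r' ↔ BFZ H h0 r = BFZ H h0 r' := by
  have hinv := BF_inv H h0 (r + r' + 1)
  have hr : r < m0 + (r + r' + 1) := by omega
  have hr' : r' < m0 + (r + r' + 1) := by omega
  have := H.pat _ _ hinv ⟨r, hr⟩ ⟨r', hr'⟩
  exact this

/-- every value appears in the domain enumeration -/
lemma BFW_cover (h0 : P t0 s0) : ∀ v : ℕ, ∃ r, BFW H h0 r = v := by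
  intro v
  induction v using Nat.strong_induction_on with
  | _ v ih =>
    by_cases hv : ∃ r, BFW H h0 r = v
    · exact hv
    · exfalso
      choose f hf using ih
      -- bound on indices for smaller values
      have hbd : ∃ J0, ∀ v' (h : v' < v), f v' h < J0 := by
        refine ⟨(Finset.range v).sup (fun v' => if h : v' < v then f v' h else 0) + 1, ?_⟩
        intro v' h
        have hle : (if h' : v' < v then f v' h' else 0) ≤
            (Finset.range v).sup (fun v' => if h : v' < v then f v' h else 0) :=
          Finset.le_sup (f := fun v'' => if h : v'' < v then f v'' h else 0)
            (Finset.mem_range.2 h)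
        rw [dif_pos h] at hle
        omega
      obtain ⟨J0, hJ0⟩ := hbd
      set j := 2 * (J0 + 1) with hj
      have hje : j % 2 = 0 := by omega
      set st := BFseq H h0 j with hst
      have hm : st.m = m0 + j := BFseq_m H h0 j
      -- every v' < v appears in st.w below st.m
      have hsmall : ∀ v' (h : v' < v), ∃ i : Fin st.m, st.w i = v' := by
        intro v' h
        have h1 : f v' h < m0 + j := by have := hJ0 v' h; omega
        refine ⟨⟨f v' h, by rw [hm]; exact h1⟩, ?_⟩
        have := BFW_eq H h0 (j := j) (r := f v' h) h1
        rw [← this]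
        exact hf v' h
      -- v does not appear
      have hnot : ∀ i : Fin st.m, st.w i ≠ v := by
        intro i hi
        refine hv ⟨(i : ℕ), ?_⟩
        have hlt : (i : ℕ) < m0 + j := by rw [← hm]; exact i.isLt
        rw [BFW_eq H h0 hlt]
        exact hi
      -- the fresh value chosen at step j equals v
      have hfr : nfind (fresh_exists (fun i : Fin st.m => st.w i)) = v := by
        have h1 : ∀ i : Fin st.m, st.w i ≠ v := hnot
        have hle : nfind (fresh_exists (fun i : Fin st.m => st.w i)) ≤ v := by
          by_contra hlt
          push_neg at hlt
          exact absurd h1 (nfind_min (fresh_exists _) hlt)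
        rcases lt_or_eq_of_le hle with hlt | heq
        · exfalso
          obtain ⟨i, hi⟩ := hsmall _ hlt
          exact nfind_spec (fresh_exists (fun i : Fin st.m => st.w i)) i hi
        · exact heq
      -- so v is added at step j
      have : (BFstep H j st).w st.m = v := by
        unfold BFstep
        rw [if_pos hje]
        simp [updt, hfr]
      refine hv ⟨st.m, ?_⟩
      have h2 : (BFseq H h0 (j+1)).w st.m = v := by
        show (BFstep H j st).w st.m = v
        exact this
      have h3 : st.m < m0 + (j+1) := by rw [hm]; omega
      rw [BFW_eq H h0 h3]
      exact h2

lemma BFZ_cover (h0 : P t0 s0) : ∀ v : ℕ, ∃ r, BFZ H h0 r = v := by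
  intro v
  induction v using Nat.strong_induction_on with
  | _ v ih =>
    by_cases hv : ∃ r, BFZ H h0 r = v
    · exact hv
    · exfalso
      choose f hf using ih
      have hbd : ∃ J0, ∀ v' (h : v' < v), f v' h < J0 := by
        refine ⟨(Finset.range v).sup (fun v' => if h : v' < v then f v' h else 0) + 1, ?_⟩
        intro v' h
        have hle : (if h' : v' < v then f v' h' else 0) ≤
            (Finset.range v).sup (fun v' => if h : v' < v then f v' h else 0) :=
          Finset.le_sup (f := fun v'' => if h : v'' < v then f v'' h else 0)
            (Finset.mem_range.2 h)
        rw [dif_pos h] at hle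
        omega
      obtain ⟨J0, hJ0⟩ := hbd
      set j := 2 * (J0 + 1) + 1 with hj
      have hje : ¬ (j % 2 = 0) := by omega
      set st := BFseq H h0 j with hst
      have hm : st.m = m0 + j := BFseq_m H h0 j
      have hsmall : ∀ v' (h : v' < v), ∃ i : Fin st.m, st.z i = v' := by
        intro v' h
        have h1 : f v' h < m0 + j := by have := hJ0 v' h; omega
        refine ⟨⟨f v' h, by rw [hm]; exact h1⟩, ?_⟩
        have := BFZ_eq H h0 (j := j) (r := f v' h) h1
        rw [← this]
        exact hf v' h
      have hnot : ∀ i : Fin st.m, st.z i ≠ v := by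
        intro i hi
        refine hv ⟨(i : ℕ), ?_⟩
        have hlt : (i : ℕ) < m0 + j := by rw [← hm]; exact i.isLt
        rw [BFZ_eq H h0 hlt]
        exact hi
      have hfr : nfind (fresh_exists (fun i : Fin st.m => st.z i)) = v := by
        have hle : nfind (fresh_exists (fun i : Fin st.m => st.z i)) ≤ v := by
          by_contra hlt
          push_neg at hlt
          exact absurd hnot (nfind_min (fresh_exists _) hlt)
        rcases lt_or_eq_of_le hle with hlt | heq
        · exfalso
          obtain ⟨i, hi⟩ := hsmall _ hlt
          exact nfind_spec (fresh_exists (fun i : Fin st.m => st.z i)) i hi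
        · exact heq
      have hstep : (BFstep H j st).z st.m = v := by
        unfold BFstep
        rw [if_neg hje]
        simp [updt, hfr]
      refine hv ⟨st.m, ?_⟩
      have h2 : (BFseq H h0 (j+1)).z st.m = v := by
        show (BFstep H j st).z st.m = v
        exact hstep
      have h3 : st.m < m0 + (j+1) := by rw [hm]; omega
      rw [BFZ_eq H h0 h3]
      exact h2

/-- The back-and-forth theorem: a relation with the back-and-forth properties
relating two tuples is realised by a permutation of ℕ. -/
theorem BF_main (H : BFHyp P) {m0 : ℕ} {t0 s0 : Fin m0 → ℕ} (h0 : P t0 s0) :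
    ∃ σ : Equiv.Perm ℕ, (∀ i, σ (t0 i) = s0 i) ∧
      ∀ {m : ℕ} (t : Fin m → ℕ), ∃ (K : ℕ) (w : Fin K → ℕ) (u : Fin m → Fin K),
        t = w ∘ u ∧ P w (fun i => σ (w i)) := by
  classical
  set W := BFW H h0 with hW
  set Z := BFZ H h0 with hZ
  have hWc : ∀ v, ∃ r, W r = v := BFW_cover H h0
  have hZc : ∀ v, ∃ r, Z r = v := BFZ_cover H h0
  have hpat : ∀ {r r'}, W r = W r' ↔ Z r = Z r' := fun {r r'} => BF_pat H h0
  set σf : ℕ → ℕ := fun v => Z (nfind (hWc v)) with hσf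
  set σg : ℕ → ℕ := fun v => W (nfind (hZc v)) with hσg
  have hfW : ∀ r, σf (W r) = Z r := by
    intro r
    have h1 : W (nfind (hWc (W r))) = W r := nfind_spec (hWc (W r))
    exact hpat.1 h1
  have hgZ : ∀ r, σg (Z r) = W r := by
    intro r
    have h1 : Z (nfind (hZc (Z r))) = Z r := nfind_spec (hZc (Z r))
    exact hpat.2 h1
  have hleft : Function.LeftInverse σg σf := by
    intro v
    obtain ⟨r, rfl⟩ := hWc v
    rw [hfW, hgZ]
  have hright : Function.RightInverse σg σf := by
    intro v
    obtain ⟨r, rfl⟩ := hZc v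
    rw [hgZ, hfW]
  refine ⟨⟨σf, σg, hleft, hright⟩, ?_, ?_⟩
  · intro i
    have h1 : W (i : ℕ) = t0 i := by
      have h2 : (i : ℕ) < m0 + 0 := by omega
      rw [hW, BFW_eq H h0 h2]
      show (if h : (i:ℕ) < m0 then t0 ⟨i, h⟩ else 0) = t0 i
      simp [i.isLt]
    have h3 : Z (i : ℕ) = s0 i := by
      have h2 : (i : ℕ) < m0 + 0 := by omega
      rw [hZ, BFZ_eq H h0 h2]
      show (if h : (i:ℕ) < m0 then s0 ⟨i, h⟩ else 0) = s0 i
      simp [i.isLt]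
    show σf (t0 i) = s0 i
    rw [← h1, hfW, h3]
  · intro m t
    have hr : ∀ i : Fin m, ∃ r, W r = t i := fun i => hWc (t i)
    choose r hrspec using hr
    set J := (Finset.univ.sup r) + 1 with hJ
    have hrJ : ∀ i, r i < m0 + J := by
      intro i
      have := Finset.le_sup (f := r) (Finset.mem_univ i)
      omega
    have hinv := BF_inv H h0 J
    refine ⟨m0 + J, fun i : Fin (m0+J) => W i,
      fun i : Fin m => (⟨r i, hrJ i⟩ : Fin (m0+J)), ?_, ?_⟩
    · funext i
      exact (hrspec i).symm
    · have hz : (fun i : Fin (m0+J) => σf (W i)) = (fun i : Fin (m0+J) => Z i) := by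
        funext i
        exact hfW i
      show P (fun i : Fin (m0+J) => W i) (fun i : Fin (m0+J) => σf (W i))
      rw [hz]
      exact hinv

end Smooth
namespace Smooth

open Set

variable {a : ℕ → ℕ} {x : Codes a}

/-- the key characterisation: for ω-categorical codes, back-and-forth
equivalence coincides with being in the same orbit. -/
theorem erel_iff_orbit (hx : OmegaCatX x) {m : ℕ} {t s : Fin m → ℕ} :
    Erel x t s ↔ ∃ g ∈ AutX x, s = tAct g t := by
  constructor
  · intro h
    have H : BFHyp (fun {m} (t s : Fin m → ℕ) => Erel x t s) := {
      pat := fun t s h i j => (h 0).1 i j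
      forth := fun t s h p => erel_forth hx h p
      back := fun t s h q => by
        obtain ⟨p, hp⟩ := erel_forth hx h.symm q
        exact ⟨p, hp.symm⟩ }
    obtain ⟨σ, hσ0, hσ⟩ := BF_main H h
    refine ⟨σ, ?_, ?_⟩
    · intro i t'
      obtain ⟨K, w, u, htw, hP⟩ := hσ t'
      have h2 := (hP 0).2 i u
      have h3 : w ∘ u = t' := htw.symm
      have h4 : ((fun i => σ (w i)) ∘ u) = fun j => σ (t' j) := by
        funext j
        simp [← h3, Function.comp]
      rw [h3, h4] at h2
      exact h2.symm
    · funext i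
      exact (hσ0 i).symm
  · rintro ⟨g, hg, rfl⟩
    exact Erel.ofAut hg t

/-- collapse of a tuple to an injective tuple -/
lemma exists_collapse {n : ℕ} (t : Fin n → ℕ) :
    ∃ (l : ℕ) (j : Fin l → Fin n) (ρ : Fin n → Fin l),
      Function.Injective (t ∘ j) ∧ ∀ i, t (j (ρ i)) = t i := by
  classical
  set F : Finset ℕ := Finset.image t Finset.univ with hF
  set e := F.equivFin with he
  have hmem : ∀ i, t i ∈ F := fun i => Finset.mem_image_of_mem t (Finset.mem_univ i)
  have hpre : ∀ q : Fin F.card, ∃ i, t i = (e.symm q : ℕ) := by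
    intro q
    have h2 : ((e.symm q : ℕ)) ∈ Finset.image t Finset.univ := (e.symm q).2
    obtain ⟨i, -, hi⟩ := Finset.mem_image.1 h2
    exact ⟨i, hi⟩
  choose j hj using hpre
  refine ⟨F.card, j, fun i => e ⟨t i, hmem i⟩, ?_, ?_⟩
  · intro p q hpq
    have h1 : (e.symm p : ℕ) = (e.symm q : ℕ) := by
      have hp := hj p
      have hq := hj q
      simp only [Function.comp] at hpq
      rw [hp, hq] at hpq
      exact hpq
    have h2 : e.symm p = e.symm q := Subtype.ext h1
    exact e.symm.injective h2
  · intro i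
    have := hj (e ⟨t i, hmem i⟩)
    rw [this]
    simp

lemma erel_pattern {m : ℕ} {t s : Fin m → ℕ} (h : Erel x t s) :
    ∀ i j, t i = t j ↔ s i = s j := (h 0).1

/-- reduction of `Erel` to the injective collapse -/
lemma erel_collapse {n l : ℕ} {t s : Fin n → ℕ} (j : Fin l → Fin n) (ρ : Fin n → Fin l)
    (hjt : ∀ i, t (j (ρ i)) = t i) (hjs : ∀ i, s (j (ρ i)) = s i) :
    Erel x t s ↔ Erel x (t ∘ j) (s ∘ j) := by
  constructor
  · intro h
    exact h.comp j
  · intro h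
    have h2 := h.comp ρ
    have ht : (t ∘ j) ∘ ρ = t := by funext i; exact hjt i
    have hs : (s ∘ j) ∘ ρ = s := by funext i; exact hjs i
    rw [ht, hs] at h2
    exact h2

end Smooth
namespace Smooth

open Set

variable {a : ℕ → ℕ} {x y : Codes a}

/-- The finite type of depth-`k` invariants of `m`-tuples. -/
def TT : ℕ → ℕ → Type
  | 0, m => (Fin m → Fin m → Bool) ×
      (∀ n : Fin (m+1), (Fin (n:ℕ) → Fin m) → (Fin (n:ℕ) → Fin m) → Bool)
  | (k+1), m => TT k m × (TT k (m+1) → Bool)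

/-- `c` is the depth-`k` invariant of the tuple `t` in the structure `x`. -/
def Sat (x : Codes a) : ∀ (k : ℕ) {m : ℕ}, (Fin m → ℕ) → TT k m → Prop
  | 0, m, t, c => (∀ i j, c.1 i j = true ↔ t i = t j) ∧
      ∀ (n : Fin (m+1)) (u v : Fin (n:ℕ) → Fin m), c.2 n u v = true ↔ Erel x (t ∘ u) (t ∘ v)
  | (k+1), _, t, c => Sat x k t c.1 ∧
      (∀ p : ℕ, ∃ d, c.2 d = true ∧ Sat x k (Fin.snoc t p) d) ∧
      (∀ d, c.2 d = true → ∃ p : ℕ, Sat x k (Fin.snoc t p) d)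

lemma boolext {b b' : Bool} (h : b = true ↔ b' = true) : b = b' := by
  cases b <;> cases b' <;> simp_all

lemma g_snoc (g : Equiv.Perm ℕ) {m : ℕ} (t : Fin m → ℕ) (p : ℕ) :
    (fun i => g ((Fin.snoc t p : Fin (m+1) → ℕ) i)) =
      (Fin.snoc (fun i => g (t i)) (g p) : Fin (m+1) → ℕ) := by
  funext i
  refine Fin.lastCases ?_ (fun i => ?_) i <;> simp

/-- functionality of `Sat`. -/
lemma Sat_fun : ∀ (k : ℕ) {m : ℕ} (t : Fin m → ℕ) (c c' : TT k m),
    Sat x k t c → Sat x k t c' → c = c'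
  | 0, m, t, c, c', h, h' => by
    refine Prod.ext ?_ ?_
    · funext i j
      exact boolext ((h.1 i j).trans (h'.1 i j).symm)
    · funext n u v
      exact boolext ((h.2 n u v).trans (h'.2 n u v).symm)
  | (k+1), m, t, c, c', h, h' => by
    refine Prod.ext (Sat_fun k t _ _ h.1 h'.1) ?_
    funext d
    refine boolext ⟨fun hd => ?_, fun hd => ?_⟩
    · obtain ⟨p, hp⟩ := h.2.2 d hd
      obtain ⟨d', hd', hsat'⟩ := h'.2.1 p
      rwa [Sat_fun k _ _ _ hp hsat']
    · obtain ⟨p, hp⟩ := h'.2.2 d hd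
      obtain ⟨d', hd', hsat'⟩ := h.2.1 p
      rwa [Sat_fun k _ _ _ hp hsat']

/-- invariance of `Sat` under automorphisms. -/
lemma Sat_aut {g : Equiv.Perm ℕ} (hg : g ∈ AutX x) :
    ∀ (k : ℕ) {m : ℕ} (t : Fin m → ℕ) (c : TT k m),
    Sat x k t c → Sat x k (fun i => g (t i)) c
  | 0, m, t, c, h => by
    constructor
    · intro i j
      rw [h.1 i j]
      constructor
      · intro hh
        exact congrArg g hh
      · intro hh
        exact g.injective hh
    · intro n u v
      rw [h.2 n u v]
      have h1 : Erel x (t ∘ u) (fun i => g ((t ∘ u) i)) := Erel.ofAut hg _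
      have h2 : Erel x (t ∘ v) (fun i => g ((t ∘ v) i)) := Erel.ofAut hg _
      have e1 : ((fun i => g (t i)) ∘ u) = (fun i => g ((t ∘ u) i)) := rfl
      have e2 : ((fun i => g (t i)) ∘ v) = (fun i => g ((t ∘ v) i)) := rfl
      rw [e1, e2]
      exact ⟨fun hh => (h1.symm.trans hh).trans h2,
        fun hh => (h1.trans hh).trans h2.symm⟩
  | (k+1), m, t, c, h => by
    refine ⟨Sat_aut hg k t c.1 h.1, fun p => ?_, fun d hd => ?_⟩
    · obtain ⟨d, hd, hsat⟩ := h.2.1 (g.symm p)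
      refine ⟨d, hd, ?_⟩
      have := Sat_aut hg k _ _ hsat
      rw [g_snoc] at this
      simpa using this
    · obtain ⟨p, hp⟩ := h.2.2 d hd
      refine ⟨g p, ?_⟩
      have := Sat_aut hg k _ _ hp
      rwa [g_snoc] at this

/-- invariance of `Sat` under back-and-forth equivalence (ω-categorical case). -/
lemma Sat_erel (hx : OmegaCatX x) {k m : ℕ} {t t' : Fin m → ℕ} (h : Erel x t t')
    {c : TT k m} (hc : Sat x k t c) : Sat x k t' c := by
  obtain ⟨g, hg, rfl⟩ := (erel_iff_orbit hx).1 h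
  exact Sat_aut hg k t c hc

/-- existence of invariants. -/
lemma Sat_exists (x : Codes a) : ∀ (k : ℕ) {m : ℕ} (t : Fin m → ℕ), ∃ c, Sat x k t c
  | 0, m, t => by
    classical
    refine ⟨(fun i j => if t i = t j then true else false,
      fun n u v => if Erel x (t ∘ u) (t ∘ v) then true else false), ?_, ?_⟩
    · intro i j
      show (if t i = t j then true else false) = true ↔ t i = t j
      split <;> simp_all
    · intro n u v
      show (if Erel x (t ∘ u) (t ∘ v) then true else false) = true ↔ Erel x (t ∘ u) (t ∘ v)
      split <;> simp_all
  | (k+1), m, t => by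
    classical
    obtain ⟨c1, hc1⟩ := Sat_exists x k t
    have hch : ∀ p : ℕ, ∃ d, Sat x k (Fin.snoc t p) d := fun p => Sat_exists x k _
    choose cf hcf using hch
    refine ⟨(c1, fun d => if ∃ p, Sat x k (Fin.snoc t p) d then true else false),
      hc1, fun p => ⟨cf p, ?_, hcf p⟩, fun d hd => ?_⟩
    · show (if ∃ p', Sat x k (Fin.snoc t p') (cf p) then true else false) = true
      rw [if_pos (⟨p, hcf p⟩ : ∃ p', Sat x k (Fin.snoc t p') (cf p))]
    · by_cases hh : ∃ p, Sat x k (Fin.snoc t p) d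
      · exact hh
      · exfalso
        have hd' : (if ∃ p, Sat x k (Fin.snoc t p) d then true else false) = true := hd
        rw [if_neg hh] at hd'
        exact absurd hd' (by simp)

/-- the cross-structure relation: tuples with common invariants at every depth. -/
def CRP (x y : Codes a) {m : ℕ} (t s : Fin m → ℕ) : Prop :=
  ∀ k, ∃ c : TT k m, Sat x k t c ∧ Sat y k s c

lemma CRP_pat {m : ℕ} {t s : Fin m → ℕ} (h : CRP x y t s) (i j : Fin m) :
    t i = t j ↔ s i = s j := by
  obtain ⟨c, hc1, hc2⟩ := h 0
  exact (hc1.1 i j).symm.trans (hc2.1 i j)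

lemma pigeon_dc {Good : ℕ → ℕ → Prop} (hstep : ∀ b k, Good b (k+1) → Good b k) :
    ∀ (b j k : ℕ), j ≤ k → Good b k → Good b j := by
  intro b j k hjk h
  obtain ⟨d, rfl⟩ := Nat.exists_eq_add_of_le hjk
  clear hjk
  induction d with
  | zero => exact h
  | succ d ih => exact ih (hstep b _ h)

lemma CRP_forth (hx : OmegaCatX x) (hy : OmegaCatX y) {m : ℕ} {t s : Fin m → ℕ}
    (h : CRP x y t s) (p : ℕ) : ∃ q, CRP x y (Fin.snoc t p) (Fin.snoc s q) := by
  refine pigeon (Good := fun q k => ∃ d : TT k (m+1),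
    Sat x k (Fin.snoc t p) d ∧ Sat y k (Fin.snoc s q) d) ?_ ?_ ?_
  · exact pigeon_dc (fun q k hk => by
      obtain ⟨d, h1, h2⟩ := hk
      exact ⟨d.1, h1.1, h2.1⟩)
  · refine range_finite_of_factor (fun q => Ecl y (Fin.snoc s q)) _ ?_ ?_
    · intro p' q' hpq
      have hpq' : Ecl y (Fin.snoc s p') = Ecl y (Fin.snoc s q') := hpq
      have h1 : Erel y (Fin.snoc s p') (Fin.snoc s q') := by
        have : (Fin.snoc s q' : Fin (m+1) → ℕ) ∈ Ecl y (Fin.snoc s p') := by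
          rw [hpq']; exact Erel.refl y _
        exact this
      ext k
      constructor
      · rintro ⟨d, h2, h3⟩
        exact ⟨d, h2, Sat_erel hy h1 h3⟩
      · rintro ⟨d, h2, h3⟩
        exact ⟨d, h2, Sat_erel hy h1.symm h3⟩
    · refine (Ecl_finite hy (m+1)).subset ?_
      rintro - ⟨q, rfl⟩
      exact ⟨_, rfl⟩
  · intro k
    obtain ⟨c, hcx, hcy⟩ := h (k+1)
    obtain ⟨d, hd, hsat⟩ := hcx.2.1 p
    obtain ⟨q, hq⟩ := hcy.2.2 d hd
    exact ⟨q, d, hsat, hq⟩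

lemma CRP_symm {m : ℕ} {t s : Fin m → ℕ} (h : CRP x y t s) : CRP y x s t := by
  intro k
  obtain ⟨c, h1, h2⟩ := h k
  exact ⟨c, h2, h1⟩

end Smooth
namespace Smooth

open Set

variable {a : ℕ → ℕ} {x y : Codes a}

def eTup : Fin 0 → ℕ := Fin.elim0

/-- the groups `AutX x` and `AutX y` are conjugate via a permutation matching
the back-and-forth equivalences. -/
def ConjE (x y : Codes a) : Prop :=
  ∃ σ : Equiv.Perm ℕ, ∀ (n : ℕ) (t s : Fin n → ℕ),
    Erel x t s ↔ Erel y (fun i => σ (t i)) (fun i => σ (s i))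

theorem crp_to_conjE (hx : OmegaCatX x) (hy : OmegaCatX y)
    (h : CRP x y eTup eTup) : ConjE x y := by
  have H : BFHyp (fun {m} (t s : Fin m → ℕ) => CRP x y t s) := {
    pat := fun t s h i j => CRP_pat h i j
    forth := fun t s h p => CRP_forth hx hy h p
    back := fun t s h q => by
      obtain ⟨p, hp⟩ := CRP_forth hy hx (CRP_symm h) q
      exact ⟨p, CRP_symm hp⟩ }
  obtain ⟨σ, -, hσ⟩ := BF_main H h
  refine ⟨σ, ?_⟩
  intro n t s
  by_cases hpat : ∀ i j, t i = t j ↔ s i = s j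
  · obtain ⟨l, j, ρ, hinj, hjρ⟩ := exists_collapse t
    have hjρs : ∀ i, s (j (ρ i)) = s i := fun i => (hpat _ _).1 (hjρ i)
    have hcx : Erel x t s ↔ Erel x (t ∘ j) (s ∘ j) := erel_collapse j ρ hjρ hjρs
    have hcy : Erel y (fun i => σ (t i)) (fun i => σ (s i)) ↔
        Erel y ((fun i => σ (t i)) ∘ j) ((fun i => σ (s i)) ∘ j) :=
      erel_collapse j ρ (fun i => congrArg σ (hjρ i)) (fun i => congrArg σ (hjρs i))
    obtain ⟨K, w, u, hTw, hP⟩ := hσ (Fin.append t s)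
    have ht : ∀ i, t i = w (u (Fin.castAdd n i)) := by
      intro i
      have : Fin.append t s (Fin.castAdd n i) = (w ∘ u) (Fin.castAdd n i) := by rw [← hTw]
      rwa [Fin.append_left] at this
    have hs : ∀ i, s i = w (u (Fin.natAdd n i)) := by
      intro i
      have : Fin.append t s (Fin.natAdd n i) = (w ∘ u) (Fin.natAdd n i) := by rw [← hTw]
      rwa [Fin.append_right] at this
    have hui : Function.Injective (fun i => u (Fin.castAdd n (j i))) := by
      intro p q hpq
      refine hinj ?_
      show t (j p) = t (j q)
      rw [ht (j p), ht (j q)]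
      exact congrArg w hpq
    have hlK : l ≤ K := by
      have := Fintype.card_le_of_injective _ hui
      simpa using this
    obtain ⟨c, hc1, hc2⟩ := hP 0
    have e1 : w ∘ (fun i => u (Fin.castAdd n (j i))) = t ∘ j := by
      funext i
      exact (ht (j i)).symm
    have e2 : w ∘ (fun i => u (Fin.natAdd n (j i))) = s ∘ j := by
      funext i
      exact (hs (j i)).symm
    have e3 : (fun i => σ (w i)) ∘ (fun i => u (Fin.castAdd n (j i))) =
        (fun i => σ (t i)) ∘ j := by
      funext i
      show σ (w (u (Fin.castAdd n (j i)))) = σ (t (j i))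
      rw [ht (j i)]
    have e4 : (fun i => σ (w i)) ∘ (fun i => u (Fin.natAdd n (j i))) =
        (fun i => σ (s i)) ∘ j := by
      funext i
      show σ (w (u (Fin.natAdd n (j i)))) = σ (s (j i))
      rw [hs (j i)]
    have hq1 := hc1.2 ⟨l, by omega⟩ (fun i => u (Fin.castAdd n (j i)))
      (fun i => u (Fin.natAdd n (j i)))
    have hq2 := hc2.2 ⟨l, by omega⟩ (fun i => u (Fin.castAdd n (j i)))
      (fun i => u (Fin.natAdd n (j i)))
    rw [e1, e2] at hq1
    rw [e3, e4] at hq2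
    rw [hcx, hcy, ← hq1, hq2]
  · constructor
    · intro hE
      exact absurd (erel_pattern hE) hpat
    · intro hE
      exfalso
      apply hpat
      intro i j
      have h2 := erel_pattern hE i j
      constructor
      · intro hh
        exact σ.injective (h2.1 (congrArg σ hh))
      · intro hh
        exact σ.injective (h2.2 (congrArg σ hh))

/-- transport of invariants along a conjugating permutation. -/
lemma sat_transport {σ : Equiv.Perm ℕ}
    (hσ : ∀ (n : ℕ) (t s : Fin n → ℕ),
      Erel x t s ↔ Erel y (fun i => σ (t i)) (fun i => σ (s i))) :
    ∀ (k : ℕ) {m : ℕ} (t : Fin m → ℕ) (c : TT k m),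
    Sat x k t c → Sat y k (fun i => σ (t i)) c
  | 0, m, t, c, h => by
    constructor
    · intro i j
      rw [h.1 i j]
      constructor
      · intro hh
        exact congrArg σ hh
      · intro hh
        exact σ.injective hh
    · intro n u v
      rw [h.2 n u v]
      have := hσ (n : ℕ) (t ∘ u) (t ∘ v)
      exact this
  | (k+1), m, t, c, h => by
    refine ⟨sat_transport hσ k t c.1 h.1, fun p => ?_, fun d hd => ?_⟩
    · obtain ⟨d, hd, hsat⟩ := h.2.1 (σ.symm p)
      refine ⟨d, hd, ?_⟩
      have := sat_transport hσ k _ _ hsat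
      rw [g_snoc] at this
      simpa using this
    · obtain ⟨p, hp⟩ := h.2.2 d hd
      refine ⟨σ p, ?_⟩
      have := sat_transport hσ k _ _ hp
      rwa [g_snoc] at this

lemma conjE_symm (h : ConjE x y) : ConjE y x := by
  obtain ⟨σ, hσ⟩ := h
  refine ⟨σ.symm, ?_⟩
  intro n t s
  have := hσ n (fun i => σ.symm (t i)) (fun i => σ.symm (s i))
  have e1 : (fun i => σ ((fun i => σ.symm (t i)) i)) = t := by
    funext i; simp
  have e2 : (fun i => σ ((fun i => σ.symm (s i)) i)) = s := by
    funext i; simp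
  rw [e1, e2] at this
  exact this.symm

lemma conjE_allsat (h : ConjE x y) (k : ℕ) (c : TT k 0) :
    Sat x k eTup c ↔ Sat y k eTup c := by
  have hback := conjE_symm h
  obtain ⟨σ, hσ⟩ := h
  obtain ⟨τ, hτ⟩ := hback
  constructor
  · intro hc
    have := sat_transport hσ k eTup c hc
    have e : (fun i => σ (eTup i)) = eTup := by
      funext i
      exact i.elim0
    rwa [e] at this
  · intro hc
    have := sat_transport hτ k eTup c hc
    have e : (fun i => τ (eTup i)) = eTup := by
      funext i
      exact i.elim0
    rwa [e] at this

lemma allsat_to_crp (h : ∀ (k : ℕ) (c : TT k 0), Sat x k eTup c ↔ Sat y k eTup c) :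
    CRP x y eTup eTup := by
  intro k
  obtain ⟨c, hc⟩ := Sat_exists x k eTup
  exact ⟨c, hc, (h k c).1 hc⟩

end Smooth
namespace Smooth

open Set

variable {a : ℕ → ℕ} {x y : Codes a}

lemma conj_mem {σ : Equiv.Perm ℕ}
    (hσ : ∀ (n : ℕ) (t s : Fin n → ℕ),
      Erel x t s ↔ Erel y (fun i => σ (t i)) (fun i => σ (s i)))
    {g : Equiv.Perm ℕ} (hg : g ∈ AutX x) : σ * g * σ⁻¹ ∈ AutX y := by
  intro i t
  set w : Fin (a i) → ℕ := fun j => σ.symm (t j) with hw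
  have h1 : Erel x w (fun j => g (w j)) := Erel.ofAut hg w
  have h2 := (hσ _ w (fun j => g (w j))).1 h1
  have e1 : (fun j => σ (w j)) = t := by
    funext j
    simp [hw]
  rw [e1] at h2
  have h3 := (h2 0).2 i id
  have e2 : t ∘ id = t := rfl
  have e3 : (fun j => σ (g (w j))) ∘ id = fun j => (σ * g * σ⁻¹) (t j) := by
    funext j
    simp [hw]
  rw [e2, e3] at h3
  exact h3.symm

lemma conjE_perm_prop (h : ConjE x y) :
    ∃ σ : Equiv.Perm ℕ, (∀ g ∈ AutX x, σ * g * σ⁻¹ ∈ AutX y) ∧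
      (∀ g ∈ AutX y, σ⁻¹ * g * σ ∈ AutX x) := by
  obtain ⟨σ, hσ⟩ := h
  have hτ : ∀ (n : ℕ) (t s : Fin n → ℕ),
      Erel y t s ↔ Erel x (fun i => σ.symm (t i)) (fun i => σ.symm (s i)) := by
    intro n t s
    have := hσ n (fun i => σ.symm (t i)) (fun i => σ.symm (s i))
    have e1 : (fun i => σ ((fun i => σ.symm (t i)) i)) = t := by
      funext i; simp
    have e2 : (fun i => σ ((fun i => σ.symm (s i)) i)) = s := by
      funext i; simp
    rw [e1, e2] at this
    exact this.symm
  refine ⟨σ, fun g hg => conj_mem hσ hg, fun g hg => ?_⟩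
  have := conj_mem hτ hg
  have e : σ.symm * g * σ.symm⁻¹ = σ⁻¹ * g * σ := rfl
  rwa [e] at this

/-- conjugation gives a topological isomorphism of automorphism groups. -/
theorem conjE_to_fobiint (h : ConjE x y) : FoBiInt x y := by
  obtain ⟨σ, mem1, mem2⟩ := conjE_perm_prop h
  have hgrp : ∀ (g : Equiv.Perm ℕ), σ⁻¹ * (σ * g * σ⁻¹) * σ = g := by
    intro g
    group
  have hgrp2 : ∀ (g : Equiv.Perm ℕ), σ * (σ⁻¹ * g * σ) * σ⁻¹ = g := by
    intro g
    group
  refine ⟨{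
    toFun := fun g => ⟨σ * (g : Equiv.Perm ℕ) * σ⁻¹, mem1 _ g.2⟩
    invFun := fun g => ⟨σ⁻¹ * (g : Equiv.Perm ℕ) * σ, mem2 _ g.2⟩
    left_inv := fun g => by
      apply Subtype.ext
      simp only
      exact hgrp _
    right_inv := fun g => by
      apply Subtype.ext
      simp only
      exact hgrp2 _
    map_mul' := fun g g' => by
      apply Subtype.ext
      show σ * (↑g * ↑g') * σ⁻¹ = (σ * ↑g * σ⁻¹) * (σ * ↑g' * σ⁻¹)
      group }, ?_, ?_⟩
  · letI tℕ : TopologicalSpace ℕ := ⊥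
    letI tF : TopologicalSpace (ℕ → ℕ) := FnTop ℕ ℕ
    letI t1 : TopologicalSpace (AutGX x) := autXTop x
    letI t2 : TopologicalSpace (AutGX y) := autXTop y
    apply continuous_induced_rng.2
    show Continuous fun g : AutGX x => (((σ * (g : Equiv.Perm ℕ) * σ⁻¹ : Equiv.Perm ℕ)) : ℕ → ℕ)
    apply continuous_pi
    intro b
    show Continuous fun g : AutGX x => σ ((g : Equiv.Perm ℕ) (σ⁻¹ b))
    have h1 : Continuous fun g : AutGX x => ((g : Equiv.Perm ℕ) : ℕ → ℕ) :=
      continuous_induced_dom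
    have h2 := (continuous_apply (σ⁻¹ b : ℕ)).comp h1
    exact (continuous_bot : Continuous σ).comp h2
  · letI tℕ : TopologicalSpace ℕ := ⊥
    letI tF : TopologicalSpace (ℕ → ℕ) := FnTop ℕ ℕ
    letI t1 : TopologicalSpace (AutGX x) := autXTop x
    letI t2 : TopologicalSpace (AutGX y) := autXTop y
    apply continuous_induced_rng.2
    show Continuous fun g : AutGX y => (((σ⁻¹ * (g : Equiv.Perm ℕ) * σ : Equiv.Perm ℕ)) : ℕ → ℕ)
    apply continuous_pi
    intro b
    show Continuous fun g : AutGX y => σ⁻¹ ((g : Equiv.Perm ℕ) (σ b))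
    have h1 : Continuous fun g : AutGX y => ((g : Equiv.Perm ℕ) : ℕ → ℕ) :=
      continuous_induced_dom
    have h2 := (continuous_apply (σ b : ℕ)).comp h1
    exact (continuous_bot : Continuous (σ⁻¹ : Equiv.Perm ℕ)).comp h2

end Smooth
namespace Smooth

open Set

variable {a : ℕ → ℕ}

lemma perm_one_coe : ((1 : Equiv.Perm ℕ) : ℕ → ℕ) = id := rfl

/-- open neighbourhoods of the identity contain pointwise stabilisers of tuples. -/
lemma open_contains_stab (z : Codes a) (V : Set (AutGX z))
    (hV : @IsOpen _ (autXTop z) V) (h1 : (1 : AutGX z) ∈ V) :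
    ∃ (m : ℕ) (s : Fin m → ℕ), ∀ h : AutGX z,
      (∀ i, (h : Equiv.Perm ℕ) (s i) = s i) → h ∈ V := by
  letI tℕ : TopologicalSpace ℕ := ⊥
  letI tF : TopologicalSpace (ℕ → ℕ) := FnTop ℕ ℕ
  letI tA : TopologicalSpace (AutGX z) := autXTop z
  obtain ⟨W, hW, hWV⟩ := isOpen_induced_iff.1 hV
  have hid : (id : ℕ → ℕ) ∈ W := by
    have h2 : (1 : AutGX z) ∈ (fun g : AutGX z => ((g : Equiv.Perm ℕ) : ℕ → ℕ)) ⁻¹' W := by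
      rw [hWV]
      exact h1
    exact h2
  obtain ⟨I, u, hu, hsub⟩ := isOpen_pi_iff.1 hW _ hid
  refine ⟨I.card, fun i => (I.equivFin.symm i : ℕ), fun h hfix => ?_⟩
  have hmem : ((h : Equiv.Perm ℕ) : ℕ → ℕ) ∈ W := by
    apply hsub
    intro q hq
    have hfix2 := hfix (I.equivFin ⟨q, hq⟩)
    simp only [Equiv.symm_apply_apply] at hfix2
    rw [hfix2]
    exact (hu q hq).2
  rw [← hWV]
  exact hmem

/-- point stabilisers are open. -/
lemma stab_open (z : Codes a) (b : ℕ) :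
    @IsOpen _ (autXTop z) {g : AutGX z | (g : Equiv.Perm ℕ) b = b} := by
  letI tℕ : TopologicalSpace ℕ := ⊥
  haveI hd : DiscreteTopology ℕ := ⟨rfl⟩
  letI tF : TopologicalSpace (ℕ → ℕ) := FnTop ℕ ℕ
  letI tA : TopologicalSpace (AutGX z) := autXTop z
  have heq : {g : AutGX z | (g : Equiv.Perm ℕ) b = b} =
      (fun g : AutGX z => ((g : Equiv.Perm ℕ) : ℕ → ℕ)) ⁻¹'
        ((fun f : ℕ → ℕ => f b) ⁻¹' {b}) := rfl
  rw [heq]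
  refine Continuous.isOpen_preimage ?_ _ (Continuous.isOpen_preimage (continuous_apply b) _ ?_)
  · exact continuous_induced_dom
  · exact isOpen_discrete _

/-- the orbit of a point. -/
def orbit1 (z : Codes a) (b : ℕ) : Set ℕ := {c | ∃ g ∈ AutX z, c = g b}

lemma orbit1_self (z : Codes a) (b : ℕ) : b ∈ orbit1 z b :=
  ⟨1, (AutGX z).one_mem, rfl⟩

lemma orbit1_translate {z : Codes a} {h : Equiv.Perm ℕ} (hh : h ∈ AutX z) (b : ℕ) :
    orbit1 z (h b) = orbit1 z b := by
  ext c
  constructor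
  · rintro ⟨g, hg, rfl⟩
    exact ⟨g * h, (AutGX z).mul_mem hg hh, rfl⟩
  · rintro ⟨g, hg, rfl⟩
    refine ⟨g * h⁻¹, (AutGX z).mul_mem hg ((AutGX z).inv_mem hh), ?_⟩
    show g b = g (h⁻¹ (h b))
    simp

/-- the least element of the orbit: a canonical representative. -/
noncomputable def rep1 (z : Codes a) (b : ℕ) : ℕ := sInf (orbit1 z b)

lemma rep1_mem (z : Codes a) (b : ℕ) : rep1 z b ∈ orbit1 z b :=
  Nat.sInf_mem ⟨b, orbit1_self z b⟩

lemma rep1_translate {z : Codes a} {h : Equiv.Perm ℕ} (hh : h ∈ AutX z) (b : ℕ) :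
    rep1 z (h b) = rep1 z b := by
  unfold rep1
  rw [orbit1_translate hh]

lemma rep1_range_finite {z : Codes a} (hz : OmegaCatX z) :
    (Set.range (rep1 z)).Finite := by
  refine range_finite_of_factor (fun b => orb z (fun _ : Fin 1 => b)) _ ?_ ?_
  · intro p q h
    have h' : orb z (fun _ : Fin 1 => p) = orb z (fun _ : Fin 1 => q) := h
    have hq : (fun _ : Fin 1 => q) ∈ orb z (fun _ : Fin 1 => p) := by
      rw [h']; exact mem_orb_self z _
    obtain ⟨g, hg, hgq⟩ := hq
    have hqp : q = g p := congrFun hgq 0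
    unfold rep1
    rw [show orbit1 z q = orbit1 z p by rw [hqp]; exact orbit1_translate hg p]
  · refine (orb_finite hz 1).subset ?_
    rintro - ⟨b, rfl⟩
    exact ⟨_, rfl⟩

section Conj

variable (x y : Codes a) (φ : AutGX x ≃* AutGX y) {mS : ℕ} (tS : Fin mS → ℕ)

/-- the property that `tS` is a controlling tuple for `φ`. -/
def CtrlTup : Prop :=
  ∀ g : AutGX x, (∀ i, (g : Equiv.Perm ℕ) (tS i) = tS i) →
    ∀ b : ℕ, ((φ g : AutGX y) : Equiv.Perm ℕ) (rep1 y b) = rep1 y b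

/-- existence of a controlling tuple, from continuity of `φ`. -/
lemma exists_ctrlTup (hy : OmegaCatX y)
    (hcont : @Continuous _ _ (autXTop x) (autXTop y) φ) :
    ∃ (mS : ℕ) (tS : Fin mS → ℕ), CtrlTup x y φ tS := by
  have hfin : (Set.range (rep1 y)).Finite := rep1_range_finite hy
  set V : Set (AutGX x) :=
    ⋂ r ∈ Set.range (rep1 y), (⇑φ) ⁻¹' {h : AutGX y | (h : Equiv.Perm ℕ) r = r} with hV
  have hVopen : @IsOpen _ (autXTop x) V := by
    letI tA : TopologicalSpace (AutGX x) := autXTop x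
    letI tB : TopologicalSpace (AutGX y) := autXTop y
    refine Set.Finite.isOpen_biInter hfin ?_
    intro r hr
    exact Continuous.isOpen_preimage hcont _ (stab_open y r)
  have h1V : (1 : AutGX x) ∈ V := by
    rw [hV]
    refine Set.mem_iInter₂.2 ?_
    intro r hr
    have h4 : φ 1 = 1 := map_one φ
    simp only [Set.mem_preimage, h4]
    rfl
  obtain ⟨m, s, hs⟩ := open_contains_stab x V hVopen h1V
  refine ⟨m, s, ?_⟩
  intro g hg b
  have hmem := hs g hg
  rw [hV] at hmem
  exact Set.mem_iInter₂.1 hmem (rep1 y b) ⟨b, rfl⟩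

/-- the class of the point `b`, as a set of `x`-side tuples. -/
def clsB (b : ℕ) : Set (Fin mS → ℕ) :=
  {u | ∃ g : AutGX x, u = tAct (g : Equiv.Perm ℕ) tS ∧
    ((φ g : AutGX y) : Equiv.Perm ℕ) (rep1 y b) = b}

variable {x y φ tS}

lemma pi_indep (hct : CtrlTup x y φ tS) (g g₁ : AutGX x)
    (h : tAct (g : Equiv.Perm ℕ) tS = tAct (g₁ : Equiv.Perm ℕ) tS) (r : ℕ) :
    ((φ g : AutGX y) : Equiv.Perm ℕ) (rep1 y r) = ((φ g₁ : AutGX y) : Equiv.Perm ℕ) (rep1 y r) := by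
  set k : AutGX x := g₁⁻¹ * g with hk
  have hfix : ∀ i, (k : Equiv.Perm ℕ) (tS i) = tS i := by
    intro i
    show (g₁ : Equiv.Perm ℕ)⁻¹ ((g : Equiv.Perm ℕ) (tS i)) = tS i
    have h1 : (g : Equiv.Perm ℕ) (tS i) = (g₁ : Equiv.Perm ℕ) (tS i) := congrFun h i
    rw [h1]
    simp
  have h2 := hct k hfix r
  have h3 : g = g₁ * k := by rw [hk]; group
  rw [h3, map_mul]
  show ((φ g₁ : AutGX y) : Equiv.Perm ℕ) (((φ k : AutGX y) : Equiv.Perm ℕ) (rep1 y r)) = _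
  rw [h2]

lemma clsB_nonempty (b : ℕ) : ∃ u, u ∈ clsB x y φ tS b := by
  obtain ⟨h₀, hh₀, heq⟩ := rep1_mem y b
  set g : AutGX x := φ.symm ⟨h₀⁻¹, (AutGX y).inv_mem hh₀⟩ with hg
  refine ⟨tAct (g : Equiv.Perm ℕ) tS, g, rfl, ?_⟩
  have h1 : φ g = ⟨h₀⁻¹, (AutGX y).inv_mem hh₀⟩ := by
    rw [hg]
    exact φ.apply_symm_apply _
  rw [h1]
  show h₀⁻¹ (rep1 y b) = b
  rw [heq]
  simp

lemma tAct_mul (g g' : Equiv.Perm ℕ) {m : ℕ} (t : Fin m → ℕ) :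
    tAct (g * g') t = tAct g (tAct g' t) := rfl

lemma clsB_equivariant (g : AutGX x) (b : ℕ) :
    sAct (g : Equiv.Perm ℕ) (clsB x y φ tS b) =
      clsB x y φ tS (((φ g : AutGX y) : Equiv.Perm ℕ) b) := by
  have hrep : rep1 y (((φ g : AutGX y) : Equiv.Perm ℕ) b) = rep1 y b :=
    rep1_translate (φ g : AutGX y).2 b
  ext w
  constructor
  · rintro ⟨u, ⟨g', rfl, hg'⟩, rfl⟩
    refine ⟨g * g', rfl, ?_⟩
    rw [hrep, map_mul]
    show ((φ g : AutGX y) : Equiv.Perm ℕ) (((φ g' : AutGX y) : Equiv.Perm ℕ) (rep1 y b)) = _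
    rw [hg']
  · rintro ⟨g'', rfl, hg''⟩
    rw [hrep] at hg''
    refine ⟨tAct ((g⁻¹ * g'' : AutGX x) : Equiv.Perm ℕ) tS, ⟨g⁻¹ * g'', rfl, ?_⟩, ?_⟩
    · rw [map_mul]
      show ((φ g⁻¹ : AutGX y) : Equiv.Perm ℕ) (((φ g'' : AutGX y) : Equiv.Perm ℕ) (rep1 y b)) = b
      rw [hg'', map_inv]
      show ((φ g : AutGX y) : Equiv.Perm ℕ)⁻¹ _ = b
      simp
    · rw [← tAct_mul]
      congr 1
      have e2 : ((g⁻¹ * g'' : AutGX x) : Equiv.Perm ℕ) =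
          ((g : Equiv.Perm ℕ))⁻¹ * (g'' : Equiv.Perm ℕ) := rfl
      rw [e2]
      group

lemma clsB_fiber (hct : CtrlTup x y φ tS) {u : Fin mS → ℕ} {b b' : ℕ}
    (hu : u ∈ clsB x y φ tS b) (hu' : u ∈ clsB x y φ tS b')
    (hr : rep1 y b = rep1 y b') : b = b' := by
  obtain ⟨g, rfl, hg⟩ := hu
  obtain ⟨g₁, heq, hg₁⟩ := hu'
  have hpi := pi_indep hct g g₁ heq b
  rw [← hg, hpi, hr]
  exact hg₁

lemma clsB_stab (hct : CtrlTup x y φ tS) (g : AutGX x) (b : ℕ) :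
    sAct (g : Equiv.Perm ℕ) (clsB x y φ tS b) = clsB x y φ tS b ↔
      ((φ g : AutGX y) : Equiv.Perm ℕ) b = b := by
  constructor
  · intro h
    rw [clsB_equivariant] at h
    obtain ⟨u, hu⟩ := clsB_nonempty (x := x) (y := y) (φ := φ) (tS := tS)
      (((φ g : AutGX y) : Equiv.Perm ℕ) b)
    have hu' : u ∈ clsB x y φ tS b := by rw [← h]; exact hu
    exact clsB_fiber hct hu hu' (rep1_translate (φ g : AutGX y).2 b)
  · intro h
    rw [clsB_equivariant, h]

lemma clsB_inj (hct : CtrlTup x y φ tS) (hay : NoAlgX y) {b b' : ℕ}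
    (h : clsB x y φ tS b = clsB x y φ tS b') : b = b' := by
  have hstab : ∀ h' : Equiv.Perm ℕ, h' ∈ AutX y → (h' b = b ↔ h' b' = b') := by
    intro h' hh'
    set g : AutGX x := φ.symm ⟨h', hh'⟩ with hg
    have hφg : φ g = ⟨h', hh'⟩ := φ.apply_symm_apply _
    have e1 : ((φ g : AutGX y) : Equiv.Perm ℕ) = h' := by rw [hφg]
    constructor
    · intro hb
      have h1 : sAct (g : Equiv.Perm ℕ) (clsB x y φ tS b) = clsB x y φ tS b :=
        (clsB_stab hct g b).2 (by rw [e1]; exact hb)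
      rw [h] at h1
      have := (clsB_stab hct g b').1 h1
      rwa [e1] at this
    · intro hb
      have h1 : sAct (g : Equiv.Perm ℕ) (clsB x y φ tS b') = clsB x y φ tS b' :=
        (clsB_stab hct g b').2 (by rw [e1]; exact hb)
      rw [← h] at h1
      have := (clsB_stab hct g b).1 h1
      rwa [e1] at this
  have hfin : Set.Finite {d : ℕ | ∃ h' ∈ AutX y,
      (∀ i : Fin 1, h' ((fun _ : Fin 1 => b) i) = (fun _ : Fin 1 => b) i) ∧ d = h' b'} := by
    refine (Set.finite_singleton b').subset ?_
    rintro d ⟨h', hh', hfix, rfl⟩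
    have := (hstab h' hh').1 (hfix 0)
    simp [this]
  have := hay 1 (fun _ : Fin 1 => b) b' hfin
  obtain ⟨i, hi⟩ := this
  exact hi.symm

lemma clsB_fix (hct : CtrlTup x y φ tS) {v : Fin mS → ℕ} {b : ℕ}
    (hv : v ∈ clsB x y φ tS b) (g : AutGX x) (hfix : ∀ i, (g : Equiv.Perm ℕ) (v i) = v i) :
    ((φ g : AutGX y) : Equiv.Perm ℕ) b = b := by
  have h1 : tAct (g : Equiv.Perm ℕ) v = v := funext hfix
  have h2 : v ∈ sAct (g : Equiv.Perm ℕ) (clsB x y φ tS b) := ⟨v, hv, h1⟩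
  rw [clsB_equivariant] at h2
  exact clsB_fiber hct h2 hv (rep1_translate (φ g : AutGX y).2 b)

lemma ent_range {n : ℕ} {a' : ℕ} {c : Set (Fin n → ℕ)} (h : Entangles a' c)
    {v : Fin n → ℕ} (hv : v ∈ c) : a' ∈ Set.range v := by
  obtain ⟨i, hi⟩ := h v hv
  exact ⟨i, hi⟩

lemma ent_equiv {n : ℕ} {a' : ℕ} {c : Set (Fin n → ℕ)} (h : Entangles a' c)
    (g : Equiv.Perm ℕ) : Entangles (g a') (sAct g c) := by
  rintro w ⟨v, hv, rfl⟩
  obtain ⟨i, hi⟩ := h v hv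
  exact ⟨i, by rw [tAct]; rw [hi]⟩

lemma ent_orbit_sub (hct : CtrlTup x y φ tS) {a' b : ℕ}
    (hent : Entangles a' (clsB x y φ tS b)) {v₀ : Fin mS → ℕ}
    (hv₀ : v₀ ∈ clsB x y φ tS b) (g : AutGX x)
    (hgb : ((φ g : AutGX y) : Equiv.Perm ℕ) b = b) :
    (g : Equiv.Perm ℕ) a' ∈ Set.range v₀ := by
  have h1 : sAct (g : Equiv.Perm ℕ) (clsB x y φ tS b) = clsB x y φ tS b :=
    (clsB_stab hct g b).2 hgb
  have h2 : v₀ ∈ sAct (g : Equiv.Perm ℕ) (clsB x y φ tS b) := by rw [h1]; exact hv₀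
  obtain ⟨w, hw, rfl⟩ := h2
  obtain ⟨i, hi⟩ := hent w hw
  exact ⟨i, by rw [tAct]; rw [hi]⟩

end Conj

end Smooth
namespace Smooth

open Set

variable {a : ℕ → ℕ}

section Conj2

variable {x y : Codes a} {φ : AutGX x ≃* AutGX y} {mS : ℕ} {tS : Fin mS → ℕ}

/-- every point entangles some class (uses density / no algebraicity of `x`). -/
lemma exists_ent (hct : CtrlTup x y φ tS) (hax : NoAlgX x)
    (hcont' : @Continuous _ _ (autXTop y) (autXTop x) ⇑φ.symm) (a' : ℕ) :
    ∃ b, Entangles a' (clsB x y φ tS b) := by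
  classical
  set V : Set (AutGX y) :=
    (⇑φ.symm) ⁻¹' {g : AutGX x | (g : Equiv.Perm ℕ) a' = a'} with hVdef
  have hVopen : @IsOpen _ (autXTop y) V := by
    letI tA : TopologicalSpace (AutGX x) := autXTop x
    letI tB : TopologicalSpace (AutGX y) := autXTop y
    exact Continuous.isOpen_preimage hcont' _ (stab_open x a')
  have h1V : (1 : AutGX y) ∈ V := by
    have h4 : φ.symm 1 = 1 := map_one φ.symm
    simp only [hVdef, Set.mem_preimage, h4]
    rfl
  obtain ⟨m2, s, hs⟩ := open_contains_stab y V hVopen h1V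
  by_contra hcon
  push_neg at hcon
  have hwit : ∀ j : Fin m2, ∃ v, v ∈ clsB x y φ tS (s j) ∧ ∀ i, v i ≠ a' := by
    intro j
    have h5 := hcon (s j)
    unfold Entangles at h5
    push_neg at h5
    obtain ⟨v, hv, hvne⟩ := h5
    exact ⟨v, hv, hvne⟩
  choose v hv hvne using hwit
  -- the concatenated tuple
  set T : Fin (m2 * mS) → ℕ := fun i =>
    v (finProdFinEquiv.symm i).1 (finProdFinEquiv.symm i).2 with hT
  have hTv : ∀ (j : Fin m2) (l : Fin mS), T (finProdFinEquiv (j, l)) = v j l := by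
    intro j l
    rw [hT]
    simp
  have hsub : {d : ℕ | ∃ g ∈ AutX x, (∀ i, g (T i) = T i) ∧ d = g a'} ⊆ {a'} := by
    rintro d ⟨g, hg, hfix, rfl⟩
    set gX : AutGX x := ⟨g, hg⟩ with hgX
    have hfixv : ∀ j : Fin m2, ∀ l, (gX : Equiv.Perm ℕ) (v j l) = v j l := by
      intro j l
      have := hfix (finProdFinEquiv (j, l))
      rwa [hTv j l] at this
    have hstab : ∀ j : Fin m2, ((φ gX : AutGX y) : Equiv.Perm ℕ) (s j) = s j := by
      intro j
      exact clsB_fix hct (hv j) gX (hfixv j)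
    have hmem : φ gX ∈ V := hs (φ gX) hstab
    have h6 : (φ.symm (φ gX) : Equiv.Perm ℕ) a' = a' := hmem
    rw [φ.symm_apply_apply] at h6
    exact h6
  have hfin : Set.Finite {d : ℕ | ∃ g ∈ AutX x, (∀ i, g (T i) = T i) ∧ d = g a'} :=
    (Set.finite_singleton a').subset hsub
  obtain ⟨i, hi⟩ := hax (m2 * mS) T a' hfin
  exact hvne _ _ hi.symm

/-- mutual algebraicity of a point and a class index. -/
def MutB (x y : Codes a) (φ : AutGX x ≃* AutGX y) {mS : ℕ} (tS : Fin mS → ℕ)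
    (a' b : ℕ) : Prop :=
  Entangles a' (clsB x y φ tS b) ∧
    Set.Finite {b' : ℕ | ∃ g : AutGX x, (g : Equiv.Perm ℕ) a' = a' ∧
      b' = ((φ g : AutGX y) : Equiv.Perm ℕ) b}

/-- the composite argument: any entangled pair is mutually algebraic. -/
lemma mut_of_ent (hct : CtrlTup x y φ tS)
    (hx : OmegaCatX x) (hax : NoAlgX x) (hay : NoAlgX y)
    (hcont : @Continuous _ _ (autXTop x) (autXTop y) ⇑φ)
    (hcont' : @Continuous _ _ (autXTop y) (autXTop x) ⇑φ.symm)
    {a' b : ℕ} (hent : Entangles a' (clsB x y φ tS b)) :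
    MutB x y φ tS a' b := by
  classical
  -- mirror controlling tuple
  obtain ⟨m', tS', hct'⟩ := exists_ctrlTup y x φ.symm hx hcont'
  -- mirror density: `b` entangles some mirror class
  have hcont'' : @Continuous _ _ (autXTop x) (autXTop y) ⇑φ.symm.symm := by
    have : ⇑φ.symm.symm = ⇑φ := by
      ext g
      rw [MulEquiv.symm_symm]
    rw [this]
    exact hcont
  obtain ⟨p, hp⟩ := exists_ent hct' hay hcont'' b
  -- finite orbit of the class of `b` under the stabiliser of `p`
  obtain ⟨w₀, hw₀⟩ := clsB_nonempty (x := y) (y := x) (φ := φ.symm) (tS := tS') p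
  have hfinO : Set.Finite {b' : ℕ | ∃ g : AutGX x, (g : Equiv.Perm ℕ) p = p ∧
      b' = ((φ g : AutGX y) : Equiv.Perm ℕ) b} := by
    refine (Set.finite_range w₀).subset ?_
    rintro - ⟨g, hgp, rfl⟩
    have h7 : ((φ.symm (φ g) : AutGX x) : Equiv.Perm ℕ) p = p := by
      rw [φ.symm_apply_apply]
      exact hgp
    exact ent_orbit_sub hct' hp hw₀ (φ g) h7
  -- the orbit of a' under the stabiliser of p is finite
  set O := {b' : ℕ | ∃ g : AutGX x, (g : Equiv.Perm ℕ) p = p ∧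
      b' = ((φ g : AutGX y) : Equiv.Perm ℕ) b} with hO
  have hmemchoice : ∀ b' : ℕ, ∃ u, u ∈ clsB x y φ tS b' := fun b' => clsB_nonempty b'
  choose mc hmc using hmemchoice
  have hsub : {d : ℕ | ∃ g ∈ AutX x, (∀ i : Fin 1, g ((fun _ : Fin 1 => p) i) = p) ∧ d = g a'} ⊆
      ⋃ b' ∈ O, Set.range (mc b') := by
    rintro d ⟨g, hg, hfix, rfl⟩
    set gX : AutGX x := ⟨g, hg⟩ with hgX
    have hb' : ((φ gX : AutGX y) : Equiv.Perm ℕ) b ∈ O := ⟨gX, hfix 0, rfl⟩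
    refine Set.mem_biUnion hb' ?_
    have hent2 : Entangles ((gX : Equiv.Perm ℕ) a')
        (clsB x y φ tS (((φ gX : AutGX y) : Equiv.Perm ℕ) b)) := by
      rw [← clsB_equivariant]
      exact ent_equiv hent _
    exact ent_range hent2 (hmc _)
  have hfin2 : Set.Finite {d : ℕ | ∃ g ∈ AutX x,
      (∀ i : Fin 1, g ((fun _ : Fin 1 => p) i) = p) ∧ d = g a'} := by
    refine Set.Finite.subset ?_ hsub
    exact hfinO.biUnion (fun b' _ => Set.finite_range (mc b'))
  obtain ⟨i, hi⟩ := hax 1 (fun _ : Fin 1 => p) a' hfin2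
  have hap : a' = p := hi
  refine ⟨hent, ?_⟩
  rw [hap]
  exact hfinO

end Conj2

end Smooth
namespace Smooth

open Set

variable {a : ℕ → ℕ}

section Conj3

variable {x y : Codes a} {φ : AutGX x ≃* AutGX y} {mS : ℕ} {tS : Fin mS → ℕ}

/-- uniqueness of the class index attached to a point. -/
lemma mut_unique_b (hct : CtrlTup x y φ tS) (hay : NoAlgX y)
    {a' b b' : ℕ} (h1 : MutB x y φ tS a' b) (h2 : MutB x y φ tS a' b') : b = b' := by
  classical
  obtain ⟨v₀, hv₀⟩ := clsB_nonempty (x := x) (y := y) (φ := φ) (tS := tS) b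
  set D := {b'' : ℕ | ∃ k : AutGX x, (k : Equiv.Perm ℕ) a' = a' ∧
      b'' = ((φ k : AutGX y) : Equiv.Perm ℕ) b'} with hD
  have hDfin : D.Finite := h2.2
  set T := {d : ℕ | ∃ g : AutGX x, ((φ g : AutGX y) : Equiv.Perm ℕ) b = b ∧
      d = ((φ g : AutGX y) : Equiv.Perm ℕ) b'} with hTdef
  have hTfin : T.Finite := by
    have hsub : T ⊆ ⋃ q ∈ Set.range v₀,
        {d : ℕ | ∃ g : AutGX x, ((φ g : AutGX y) : Equiv.Perm ℕ) b = b ∧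
          (g : Equiv.Perm ℕ) a' = q ∧ d = ((φ g : AutGX y) : Equiv.Perm ℕ) b'} := by
      rintro - ⟨g, hgb, rfl⟩
      have hq : (g : Equiv.Perm ℕ) a' ∈ Set.range v₀ := ent_orbit_sub hct h1.1 hv₀ g hgb
      exact Set.mem_biUnion hq ⟨g, hgb, rfl, rfl⟩
    refine Set.Finite.subset ?_ hsub
    refine (Set.finite_range v₀).biUnion ?_
    intro q hq
    by_cases hne : ∃ g : AutGX x, ((φ g : AutGX y) : Equiv.Perm ℕ) b = b ∧
        (g : Equiv.Perm ℕ) a' = q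
    · obtain ⟨g₀, hg₀b, hg₀a⟩ := hne
      refine (hDfin.image (fun d => ((φ g₀ : AutGX y) : Equiv.Perm ℕ) d)).subset ?_
      rintro - ⟨g, hgb, hga, rfl⟩
      refine ⟨((φ (g₀⁻¹ * g) : AutGX y) : Equiv.Perm ℕ) b', ⟨g₀⁻¹ * g, ?_, rfl⟩, ?_⟩
      · show ((g₀ : Equiv.Perm ℕ))⁻¹ ((g : Equiv.Perm ℕ) a') = a'
        rw [hga, ← hg₀a]
        simp
      · show ((φ g₀ : AutGX y) : Equiv.Perm ℕ)
            (((φ (g₀⁻¹ * g) : AutGX y) : Equiv.Perm ℕ) b') =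
            ((φ g : AutGX y) : Equiv.Perm ℕ) b'
        have e5 : φ g = φ g₀ * φ (g₀⁻¹ * g) := by
          rw [← map_mul]
          congr 1
          group
        have e6 := congrArg (fun ψ : AutGX y => (ψ : Equiv.Perm ℕ) b') e5
        exact e6.symm
    · refine (Set.finite_empty).subset ?_
      rintro - ⟨g, hgb, hga, rfl⟩
      exact absurd ⟨g, hgb, hga⟩ hne
  have hfinT' : Set.Finite {d : ℕ | ∃ h' ∈ AutX y,
      (∀ i : Fin 1, h' ((fun _ : Fin 1 => b) i) = b) ∧ d = h' b'} := by
    refine hTfin.subset ?_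
    rintro - ⟨h', hh', hfix, rfl⟩
    set g : AutGX x := φ.symm ⟨h', hh'⟩ with hg
    have hφg : ((φ g : AutGX y) : Equiv.Perm ℕ) = h' := by
      rw [hg, φ.apply_symm_apply]
    exact ⟨g, by rw [hφg]; exact hfix 0, by rw [hφg]⟩
  obtain ⟨i, hi⟩ := hay 1 (fun _ : Fin 1 => b) b' hfinT'
  exact hi.symm

/-- uniqueness of the point attached to a class index. -/
lemma mut_unique_a (hax : NoAlgX x)
    {a' a'' b : ℕ} (h1 : MutB x y φ tS a' b) (h2 : MutB x y φ tS a'' b) : a' = a'' := by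
  classical
  have hmemchoice : ∀ b' : ℕ, ∃ u, u ∈ clsB x y φ tS b' := fun b' => clsB_nonempty b'
  choose mc hmc using hmemchoice
  set O := {b' : ℕ | ∃ g : AutGX x, (g : Equiv.Perm ℕ) a' = a' ∧
      b' = ((φ g : AutGX y) : Equiv.Perm ℕ) b} with hO
  have hOfin : O.Finite := h1.2
  have hsub : {d : ℕ | ∃ g ∈ AutX x, (∀ i : Fin 1, g ((fun _ : Fin 1 => a') i) = a') ∧
      d = g a''} ⊆ ⋃ b' ∈ O, Set.range (mc b') := by
    rintro - ⟨g, hg, hfix, rfl⟩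
    set gX : AutGX x := ⟨g, hg⟩ with hgX
    have hb' : ((φ gX : AutGX y) : Equiv.Perm ℕ) b ∈ O := ⟨gX, hfix 0, rfl⟩
    refine Set.mem_biUnion hb' ?_
    have hent2 : Entangles ((gX : Equiv.Perm ℕ) a'')
        (clsB x y φ tS (((φ gX : AutGX y) : Equiv.Perm ℕ) b)) := by
      rw [← clsB_equivariant]
      exact ent_equiv h2.1 _
    exact ent_range hent2 (hmc _)
  have hfin2 : Set.Finite {d : ℕ | ∃ g ∈ AutX x,
      (∀ i : Fin 1, g ((fun _ : Fin 1 => a') i) = a') ∧ d = g a''} := by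
    refine Set.Finite.subset ?_ hsub
    exact hOfin.biUnion (fun b' _ => Set.finite_range (mc b'))
  obtain ⟨i, hi⟩ := hax 1 (fun _ : Fin 1 => a') a'' hfin2
  exact hi.symm

/-- equivariance of mutual algebraicity. -/
lemma mut_equiv {a' b : ℕ} (h : MutB x y φ tS a' b) (g : AutGX x) :
    MutB x y φ tS ((g : Equiv.Perm ℕ) a') (((φ g : AutGX y) : Equiv.Perm ℕ) b) := by
  constructor
  · rw [← clsB_equivariant]
    exact ent_equiv h.1 _
  · refine (h.2.image (fun d => ((φ g : AutGX y) : Equiv.Perm ℕ) d)).subset ?_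
    rintro - ⟨g', hg'a, rfl⟩
    refine ⟨((φ (g⁻¹ * g' * g) : AutGX y) : Equiv.Perm ℕ) b, ⟨g⁻¹ * g' * g, ?_, rfl⟩, ?_⟩
    · show ((g : Equiv.Perm ℕ))⁻¹ ((g' : Equiv.Perm ℕ) ((g : Equiv.Perm ℕ) a')) = a'
      rw [hg'a]
      simp
    · show ((φ g : AutGX y) : Equiv.Perm ℕ)
          (((φ (g⁻¹ * g' * g) : AutGX y) : Equiv.Perm ℕ) b) =
          ((φ g' : AutGX y) : Equiv.Perm ℕ) (((φ g : AutGX y) : Equiv.Perm ℕ) b)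
      have e5 : φ g' * φ g = φ g * φ (g⁻¹ * g' * g) := by
        rw [← map_mul, ← map_mul]
        congr 1
        group
      have e6 := congrArg (fun ψ : AutGX y => (ψ : Equiv.Perm ℕ) b) e5
      exact e6.symm

/-- surjectivity: every class index has a mutually algebraic point. -/
lemma mut_surj (hct : CtrlTup x y φ tS)
    (hx : OmegaCatX x) (hy : OmegaCatX y) (hax : NoAlgX x) (hay : NoAlgX y)
    (hcont : @Continuous _ _ (autXTop x) (autXTop y) ⇑φ)
    (hcont' : @Continuous _ _ (autXTop y) (autXTop x) ⇑φ.symm)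
    (b : ℕ) : ∃ a', MutB x y φ tS a' b := by
  classical
  obtain ⟨m', tS', hct'⟩ := exists_ctrlTup y x φ.symm hx hcont'
  have hcont'' : @Continuous _ _ (autXTop x) (autXTop y) ⇑φ.symm.symm := by
    have he : ⇑φ.symm.symm = ⇑φ := by
      ext g
      rw [MulEquiv.symm_symm]
    rw [he]
    exact hcont
  obtain ⟨p, hp⟩ := exists_ent hct' hay hcont'' b
  have hmut' : MutB y x φ.symm tS' b p :=
    mut_of_ent hct' hy hay hax hcont' hcont'' hp
  -- translate the finiteness through φ
  have hfin : Set.Finite {p' : ℕ | ∃ g : AutGX x,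
      ((φ g : AutGX y) : Equiv.Perm ℕ) b = b ∧ p' = (g : Equiv.Perm ℕ) p} := by
    refine hmut'.2.subset ?_
    rintro - ⟨g, hgb, rfl⟩
    refine ⟨φ g, hgb, ?_⟩
    rw [φ.symm_apply_apply]
  -- p entangles the class of b
  have hent : Entangles p (clsB x y φ tS b) := by
    intro v hv
    have hsub : {d : ℕ | ∃ g ∈ AutX x, (∀ i, g (v i) = v i) ∧ d = g p} ⊆
        {p' : ℕ | ∃ g : AutGX x,
          ((φ g : AutGX y) : Equiv.Perm ℕ) b = b ∧ p' = (g : Equiv.Perm ℕ) p} := by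
      rintro - ⟨g, hg, hfix, rfl⟩
      exact ⟨⟨g, hg⟩, clsB_fix hct hv ⟨g, hg⟩ hfix, rfl⟩
    obtain ⟨i, hi⟩ := hax mS v p (hfin.subset hsub)
    exact ⟨i, hi.symm⟩
  exact ⟨p, mut_of_ent hct hx hax hay hcont hcont' hent⟩

/-- the heart of the matter: a topological isomorphism of the automorphism groups
of ω-categorical structures without algebraicity is induced by a permutation. -/
theorem fobiint_to_conjE {x y : Codes a}
    (hx : OmegaCatX x) (hax : NoAlgX x) (hy : OmegaCatX y) (hay : NoAlgX y)
    (h : FoBiInt x y) : ConjE x y := by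
  classical
  obtain ⟨φ, hcont, hcont'⟩ := h
  obtain ⟨mS, tS, hct⟩ := exists_ctrlTup x y φ hy hcont
  have hex : ∀ a' : ℕ, ∃ b, MutB x y φ tS a' b := by
    intro a'
    obtain ⟨b, hb⟩ := exists_ent hct hax hcont' a'
    exact ⟨b, mut_of_ent hct hx hax hay hcont hcont' hb⟩
  choose e he using hex
  have hinj : Function.Injective e := by
    intro a' a'' h12
    exact mut_unique_a hax (he a') (h12 ▸ he a'')
  have hsurj : Function.Surjective e := by
    intro b
    obtain ⟨a', ha'⟩ := mut_surj hct hx hy hax hay hcont hcont' b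
    exact ⟨a', mut_unique_b hct hay (he a') ha'⟩
  have hequiv : ∀ (g : AutGX x) (a' : ℕ),
      e ((g : Equiv.Perm ℕ) a') = ((φ g : AutGX y) : Equiv.Perm ℕ) (e a') := by
    intro g a'
    exact mut_unique_b hct hay (he _) (mut_equiv (he a') g)
  set σ : Equiv.Perm ℕ := Equiv.ofBijective e ⟨hinj, hsurj⟩ with hσ
  have hσe : ∀ n, σ n = e n := fun n => rfl
  refine ⟨σ, ?_⟩
  intro n t s
  constructor
  · intro hE
    obtain ⟨g, hg, rfl⟩ := (erel_iff_orbit hx).1 hE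
    have he2 : (fun i => σ (tAct g t i)) =
        tAct ((φ ⟨g, hg⟩ : AutGX y) : Equiv.Perm ℕ) (fun i => σ (t i)) := by
      funext i
      show σ (g (t i)) = ((φ ⟨g, hg⟩ : AutGX y) : Equiv.Perm ℕ) (σ (t i))
      rw [hσe, hσe]
      exact hequiv ⟨g, hg⟩ (t i)
    rw [he2]
    exact Erel.of_orb ⟨_, (φ ⟨g, hg⟩ : AutGX y).2, rfl⟩
  · intro hE
    obtain ⟨h', hh', heq⟩ := (erel_iff_orbit hy).1 hE
    set g : AutGX x := φ.symm ⟨h', hh'⟩ with hgdef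
    have hφg : ((φ g : AutGX y) : Equiv.Perm ℕ) = h' := by
      rw [hgdef, φ.apply_symm_apply]
    have hs : s = tAct (g : Equiv.Perm ℕ) t := by
      funext i
      have h8 : σ (s i) = h' (σ (t i)) := congrFun heq i
      rw [← hφg] at h8
      have h9 : σ (s i) = σ ((g : Equiv.Perm ℕ) (t i)) := by
        rw [h8, hσe, hσe]
        exact (hequiv g (t i)).symm
      exact σ.injective h9
    rw [hs]
    exact Erel.ofAut g.2 t
  
end Conj3

end Smooth
namespace Smooth

open Set

variable {a : ℕ → ℕ}

/-- instances for the invariant types. -/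
noncomputable def TTfin : ∀ (k m : ℕ), Fintype (TT k m)
  | 0, m => by
    unfold TT
    classical
    infer_instance
  | (k+1), m => by
    unfold TT
    letI := TTfin k m
    letI := TTfin k (m+1)
    classical
    infer_instance

noncomputable def TTenc (k m : ℕ) : Encodable (TT k m) := by
  letI := TTfin k m
  classical
  exact Fintype.toEncodable _

noncomputable def sigEnc : Encodable (Σ k : ℕ, TT k 0) :=
  @Sigma.encodable ℕ (fun k => TT k 0) _ (fun k => TTenc k 0)

/-- `true` iff `c` is the depth-`k` invariant of the empty tuple of `x`. -/
noncomputable def satB (x : Codes a) (k : ℕ) (c : TT k 0) : Bool :=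
  @dite _ (Sat x k eTup c) (Classical.dec _) (fun _ => true) (fun _ => false)

lemma satB_iff (x : Codes a) (k : ℕ) (c : TT k 0) :
    satB x k c = true ↔ Sat x k eTup c := by
  unfold satB
  split
  · simp_all
  · simp_all

/-- the complete invariant, as a function `ℕ → Bool`. -/
noncomputable def chi (x : Codes a) (n : ℕ) : Bool :=
  match @Encodable.decode _ sigEnc n with
  | none => false
  | some ⟨k, c⟩ => satB x k c

lemma chi_eq_iff (x y : Codes a) :
    chi x = chi y ↔ ∀ (k : ℕ) (c : TT k 0), (Sat x k eTup c ↔ Sat y k eTup c) := by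
  constructor
  · intro h k c
    have h1 := congrFun h (@Encodable.encode _ sigEnc ⟨k, c⟩)
    unfold chi at h1
    rw [@Encodable.encodek _ sigEnc ⟨k, c⟩] at h1
    simp only at h1
    rw [← satB_iff x k c, ← satB_iff y k c, h1]
  · intro h
    funext n
    unfold chi
    rcases hd : @Encodable.decode _ sigEnc n with - | ⟨k, c⟩
    · rfl
    · simp only
      exact boolext ((satB_iff x k c).trans ((h k c).trans (satB_iff y k c).symm))

section Meas

lemma eval_open (i : ℕ) (v : Fin (a i) → ℕ) (bb : Bool) :
    @IsOpen (Codes a) (XTop a) {x | x i v = bb} := by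
  letI tB : TopologicalSpace Bool := ⊥
  haveI : DiscreteTopology Bool := ⟨rfl⟩
  letI tI : ∀ j : ℕ, TopologicalSpace ((Fin (a j) → ℕ) → Bool) := fun j => Pi.topologicalSpace
  letI tX : TopologicalSpace (Codes a) := XTop a
  have hc : Continuous (fun x : Codes a => x i v) :=
    (continuous_apply v).comp (continuous_apply i)
  have he : {x : Codes a | x i v = bb} = (fun x : Codes a => x i v) ⁻¹' {bb} := rfl
  rw [he]
  exact hc.isOpen_preimage _ (isOpen_discrete _)

lemma meas_eval (i : ℕ) (v : Fin (a i) → ℕ) (bb : Bool) :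
    @MeasurableSet (Codes a) (@borel (Codes a) (XTop a)) {x | x i v = bb} :=
  MeasurableSpace.measurableSet_generateFrom (eval_open i v bb)

lemma meas_const (P : Prop) :
    @MeasurableSet (Codes a) (@borel (Codes a) (XTop a)) {x : Codes a | P} := by
  letI mX : MeasurableSpace (Codes a) := @borel (Codes a) (XTop a)
  by_cases h : P
  · have : {x : Codes a | P} = Set.univ := by
      ext x; simp [h]
    rw [this]
    exact MeasurableSet.univ
  · have : {x : Codes a | P} = ∅ := by
      ext x; simp [h]
    rw [this]
    exact MeasurableSet.empty

lemma meas_eval_eq (i : ℕ) (v w : Fin (a i) → ℕ) :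
    @MeasurableSet (Codes a) (@borel (Codes a) (XTop a)) {x | x i v = x i w} := by
  have he : {x : Codes a | x i v = x i w} =
      ({x | x i v = true} ∩ {x | x i w = true}) ∪
      ({x | x i v = false} ∩ {x | x i w = false}) := by
    ext x
    rcases hv : x i v <;> rcases hw : x i w <;> simp [hv, hw]
  rw [he]
  exact (((meas_eval i v true).inter (meas_eval i w true)).union
    (((meas_eval i v false).inter (meas_eval i w false))))

lemma meas_Eqv : ∀ (k : ℕ) {m : ℕ} (t s : Fin m → ℕ),
    @MeasurableSet (Codes a) (@borel (Codes a) (XTop a)) {x | Eqv x k t s}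
  | 0, m, t, s => by
    have he : {x : Codes a | Eqv x 0 t s} =
        {x : Codes a | ∀ i j, t i = t j ↔ s i = s j} ∩
        ⋂ (i : ℕ), ⋂ (u : Fin (a i) → Fin m), {x | x i (t ∘ u) = x i (s ∘ u)} := by
      ext x
      simp only [Set.mem_inter_iff, Set.mem_iInter, Set.mem_setOf_eq]
      rfl
    rw [he]
    refine (meas_const _).inter ?_
    exact MeasurableSet.iInter fun i => MeasurableSet.iInter fun u => meas_eval_eq i _ _
  | (k+1), m, t, s => by
    have he : {x : Codes a | Eqv x (k+1) t s} =
        {x | Eqv x k t s} ∩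
        (⋂ (p : ℕ), ⋃ (q : ℕ), {x | Eqv x k (Fin.snoc t p) (Fin.snoc s q)}) ∩
        (⋂ (q : ℕ), ⋃ (p : ℕ), {x | Eqv x k (Fin.snoc t p) (Fin.snoc s q)}) := by
      ext x
      simp only [Set.mem_inter_iff, Set.mem_iInter, Set.mem_iUnion, Set.mem_setOf_eq]
      constructor
      · rintro ⟨h1, h2, h3⟩
        exact ⟨⟨h1, h2⟩, h3⟩
      · rintro ⟨⟨h1, h2⟩, h3⟩
        exact ⟨h1, h2, h3⟩
    rw [he]
    refine MeasurableSet.inter (MeasurableSet.inter (meas_Eqv k t s) ?_) ?_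
    · exact MeasurableSet.iInter fun p => MeasurableSet.iUnion fun q => meas_Eqv k _ _
    · exact MeasurableSet.iInter fun q => MeasurableSet.iUnion fun p => meas_Eqv k _ _

lemma meas_Erel {m : ℕ} (t s : Fin m → ℕ) :
    @MeasurableSet (Codes a) (@borel (Codes a) (XTop a)) {x | Erel x t s} := by
  have he : {x : Codes a | Erel x t s} = ⋂ (k : ℕ), {x | Eqv x k t s} := by
    ext x
    simp only [Set.mem_iInter, Set.mem_setOf_eq]
    rfl
  rw [he]
  exact MeasurableSet.iInter fun k => meas_Eqv k t s

lemma meas_iff {S : Set (Codes a)} (hS : @MeasurableSet (Codes a) (@borel (Codes a) (XTop a)) S)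
    (b : Bool) : @MeasurableSet (Codes a) (@borel (Codes a) (XTop a)) {x | b = true ↔ x ∈ S} := by
  cases b
  · have : {x : Codes a | false = true ↔ x ∈ S} = Sᶜ := by
      ext x
      simp
    rw [this]
    exact hS.compl
  · have : {x : Codes a | true = true ↔ x ∈ S} = S := by
      ext x
      simp
    rw [this]
    exact hS

lemma meas_Sat : ∀ (k : ℕ) {m : ℕ} (t : Fin m → ℕ) (c : TT k m),
    @MeasurableSet (Codes a) (@borel (Codes a) (XTop a)) {x | Sat x k t c}
  | 0, m, t, c => by
    have he : {x : Codes a | Sat x 0 t c} =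
        {x : Codes a | ∀ i j, c.1 i j = true ↔ t i = t j} ∩
        ⋂ (n : Fin (m+1)), ⋂ (u : Fin (n:ℕ) → Fin m), ⋂ (v : Fin (n:ℕ) → Fin m),
          {x | c.2 n u v = true ↔ x ∈ {x' : Codes a | Erel x' (t ∘ u) (t ∘ v)}} := by
      ext x
      simp only [Set.mem_inter_iff, Set.mem_iInter, Set.mem_setOf_eq]
      rfl
    rw [he]
    refine (meas_const _).inter ?_
    exact MeasurableSet.iInter fun n => MeasurableSet.iInter fun u =>
      MeasurableSet.iInter fun v => meas_iff (meas_Erel _ _) _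
  | (k+1), m, t, c => by
    letI := TTfin k (m+1)
    haveI : Countable (TT k (m+1)) := Finite.to_countable
    have he : {x : Codes a | Sat x (k+1) t c} =
        {x | Sat x k t c.1} ∩
        (⋂ (p : ℕ), ⋃ (d : TT k (m+1)), ({x : Codes a | c.2 d = true} ∩
          {x | Sat x k (Fin.snoc t p) d})) ∩
        (⋂ (d : TT k (m+1)), ⋂ (_ : c.2 d = true), ⋃ (p : ℕ),
          {x | Sat x k (Fin.snoc t p) d}) := by
      ext x
      simp only [Set.mem_inter_iff, Set.mem_iInter, Set.mem_iUnion, Set.mem_setOf_eq]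
      constructor
      · rintro ⟨h1, h2, h3⟩
        exact ⟨⟨h1, fun p => by
          obtain ⟨d, hd1, hd2⟩ := h2 p
          exact ⟨d, hd1, hd2⟩⟩, fun d hd => h3 d hd⟩
      · rintro ⟨⟨h1, h2⟩, h3⟩
        exact ⟨h1, fun p => by
          obtain ⟨d, hd1, hd2⟩ := h2 p
          exact ⟨d, hd1, hd2⟩, fun d hd => h3 d hd⟩
    rw [he]
    refine MeasurableSet.inter (MeasurableSet.inter (meas_Sat k t c.1) ?_) ?_
    · exact MeasurableSet.iInter fun p => MeasurableSet.iUnion fun d =>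
        (meas_const _).inter (meas_Sat k _ d)
    · exact MeasurableSet.iInter fun d => MeasurableSet.iInter fun _ =>
        MeasurableSet.iUnion fun p => meas_Sat k _ d

lemma meas_chi :
    @Measurable (Codes a) (ℕ → Bool) (@borel (Codes a) (XTop a)) _ (fun x => chi x) := by
  letI mX : MeasurableSpace (Codes a) := @borel (Codes a) (XTop a)
  refine measurable_pi_lambda _ ?_
  intro n
  classical
  unfold chi
  rcases hd : @Encodable.decode _ sigEnc n with - | ⟨k, c⟩
  · simp only [hd]
    exact measurable_const
  · simp only [hd]
    have he : (fun x : Codes a => satB x k c) =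
        fun x : Codes a => if Sat x k eTup c then true else false := by
      funext x
      unfold satB
      by_cases h : Sat x k eTup c
      · simp [h]
      · simp [h]
    rw [he]
    exact Measurable.ite (meas_Sat k eTup c) measurable_const measurable_const

end Meas

end Smooth
open Smooth

/-- fo-bi-interpretability is a smooth equivalence relation on the class of
ω-categorical structures without algebraicity. -/
theorem foBiInterpretability_smooth (a : ℕ → ℕ) :
    ∃ f : Codes a → ℝ,
      @Measurable (Codes a) ℝ (@borel (Codes a) (XTop a)) Real.measurableSpace f ∧
      ∀ x y : Codes a,
        OmegaCatX x → NoAlgX x → OmegaCatX y → NoAlgX y →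
        (FoBiInt x y ↔ f x = f y) := by
  classical
  obtain ⟨emb, hemb⟩ := MeasureTheory.exists_measurableEmbedding_real (ℕ → Bool)
  refine ⟨fun x => emb (chi x), ?_, ?_⟩
  · letI mX : MeasurableSpace (Codes a) := @borel (Codes a) (XTop a)
    exact hemb.measurable.comp meas_chi
  · intro x y hx hax hy hay
    constructor
    · intro h
      have hconj := fobiint_to_conjE hx hax hy hay h
      have hall : ∀ (k : ℕ) (c : TT k 0), Sat x k eTup c ↔ Sat y k eTup c :=
        fun k c => conjE_allsat hconj k c
      have hc : chi x = chi y := (chi_eq_iff x y).2 hall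
      show emb (chi x) = emb (chi y)
      rw [hc]
    · intro h
      have hchi : chi x = chi y := hemb.injective (by exact h)
      have hall := (chi_eq_iff x y).1 hchi
      have hcrp := allsat_to_crp hall
      have hconj := crp_to_conjE hx hy hcrp
      exact conjE_to_fobiint hconj
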